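/- arXiv:2310.15922 — 9 statements merged into one kernel-verified Lean document; each statement's English description precedes it below -/
import Mathlib

section
/- Let A, B, C be n×n complex matrices satisfying the commutation relations [A, C] = −i·B and [B, C] = i·A. Then for every real number θ, exp(−iθC) · A · exp(iθC) = (cos θ) · A + (sin θ) · B. -/
open Matrix NormedSpace

section aux
attribute [local instance] Matrix.linftyOpNormedAddCommGroup Matrix.linftyOpNormedRing
  Matrix.linftyOpNormedAlgebra

private lemma aux_const {n : ℕ} (A B C : Matrix (Fin n) (Fin n) ℂ)
    (hAC : A * C - C * A = (-Complex.I) • B)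
    (hBC : B * C - C * B = Complex.I • A)
    (θ : ℝ) :
    exp (θ • (Complex.I • C)) * ((Real.cos θ : ℂ) • A + (Real.sin θ : ℂ) • B)
      * exp (θ • (-(Complex.I • C))) = A := by
  set X : Matrix (Fin n) (Fin n) ℂ := Complex.I • C with hX
  set g : ℝ → Matrix (Fin n) (Fin n) ℂ := fun t =>
    exp (t • X) * ((Real.cos t : ℂ) • A + (Real.sin t : ℂ) • B) * exp (t • (-X)) with hg
  have hCA : C * A = A * C + Complex.I • B := by
    have h := hAC; rw [sub_eq_iff_eq_add] at h
    rw [h]; simp [neg_smul]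
  have hCB : C * B = B * C - Complex.I • A := by
    have h := hBC; rw [sub_eq_iff_eq_add] at h
    rw [h]; abel
  have key : ∀ t : ℝ, HasDerivAt g 0 t := by
    intro t
    have hu : HasDerivAt (fun s : ℝ => exp (s • X)) (exp (t • X) * X) t :=
      hasDerivAt_exp_smul_const X t
    have hw : HasDerivAt (fun s : ℝ => exp (s • (-X))) (exp (t • (-X)) * (-X)) t :=
      hasDerivAt_exp_smul_const (-X) t
    have hcos : HasDerivAt (fun s : ℝ => ((Real.cos s : ℂ))) (-(Real.sin t : ℂ)) t := by
      simpa using (Real.hasDerivAt_cos t).ofReal_comp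
    have hsin : HasDerivAt (fun s : ℝ => ((Real.sin s : ℂ))) ((Real.cos t : ℂ)) t :=
      (Real.hasDerivAt_sin t).ofReal_comp
    have hv : HasDerivAt (fun s : ℝ => (Real.cos s : ℂ) • A + (Real.sin s : ℂ) • B)
        ((-(Real.sin t : ℂ)) • A + (Real.cos t : ℂ) • B) t :=
      (hcos.smul_const A).add (hsin.smul_const B)
    have h1 := (hu.mul hv).mul hw
    have hcomm : exp (t • (-X)) * (-X) = (-X) * exp (t • (-X)) :=
      (((Commute.refl (-X)).smul_right t).exp_right).eq.symm
    have hmid : X * ((Real.cos t : ℂ) • A + (Real.sin t : ℂ) • B) +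
        ((-(Real.sin t : ℂ)) • A + (Real.cos t : ℂ) • B) -
        ((Real.cos t : ℂ) • A + (Real.sin t : ℂ) • B) * X = 0 := by
      rw [hX]
      simp only [Matrix.smul_mul, Matrix.mul_smul, Matrix.mul_add, Matrix.add_mul,
        smul_add, smul_smul, smul_comm (Complex.I)]
      rw [hCA, hCB]
      match_scalars <;> ring_nf <;> simp [Complex.I_sq]
    have hzero : (exp (t • X) * X * ((Real.cos t : ℂ) • A + (Real.sin t : ℂ) • B) +
          exp (t • X) * ((-(Real.sin t : ℂ)) • A + (Real.cos t : ℂ) • B)) * exp (t • (-X)) +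
        exp (t • X) * ((Real.cos t : ℂ) • A + (Real.sin t : ℂ) • B)
          * (exp (t • (-X)) * (-X)) = 0 := by
      rw [hcomm]
      calc (exp (t • X) * X * ((Real.cos t : ℂ) • A + (Real.sin t : ℂ) • B) +
          exp (t • X) * ((-(Real.sin t : ℂ)) • A + (Real.cos t : ℂ) • B)) * exp (t • (-X)) +
          exp (t • X) * ((Real.cos t : ℂ) • A + (Real.sin t : ℂ) • B)
            * (-X * exp (t • (-X)))
          = exp (t • X) * (X * ((Real.cos t : ℂ) • A + (Real.sin t : ℂ) • B) +
              ((-(Real.sin t : ℂ)) • A + (Real.cos t : ℂ) • B) -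
              ((Real.cos t : ℂ) • A + (Real.sin t : ℂ) • B) * X) * exp (t • (-X)) := by
            noncomm_ring
        _ = 0 := by rw [hmid]; simp
    rw [hg]
    exact hzero ▸ h1
  have hconst : g θ = g 0 := by
    have hdiff : Differentiable ℝ g := fun t => (key t).differentiableAt
    have hderiv : ∀ t, deriv g t = 0 := fun t => (key t).deriv
    exact is_const_of_deriv_eq_zero hdiff hderiv θ 0
  have h0 : g 0 = A := by simp [hg, exp_zero]
  rw [hg] at hconst
  simpa [h0] using hconst
end aux

section main
attribute [local instance] Matrix.linftyOpNormedAddCommGroup Matrix.linftyOpNormedRing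
  Matrix.linftyOpNormedAlgebra

/-- If `A, B, C` are `n × n` complex matrices with `[A, C] = −i B` and
`[B, C] = i A`, then for every real `θ`,
`exp(−iθC) A exp(iθC) = (cos θ) A + (sin θ) B`. -/
theorem exp_conj_rotation
    {n : ℕ} (A B C : Matrix (Fin n) (Fin n) ℂ)
    (hAC : A * C - C * A = (-Complex.I) • B)
    (hBC : B * C - C * B = Complex.I • A)
    (θ : ℝ) :
    NormedSpace.exp ((-(Complex.I * θ)) • C) * A * NormedSpace.exp ((Complex.I * θ) • C)
      = (Real.cos θ : ℂ) • A + (Real.sin θ : ℂ) • B := by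
  have key := aux_const A B C hAC hBC θ
  have hs1 : θ • (Complex.I • C) = (Complex.I * θ) • C := by
    rw [← smul_assoc]
    congr 1
    simp [Complex.real_smul, mul_comm]
  have hs2 : θ • (-(Complex.I • C)) = (-(Complex.I * θ)) • C := by
    rw [smul_neg, hs1, ← neg_smul]
  rw [hs1, hs2] at key
  set E := exp ((Complex.I * θ) • C) with hE
  set F := exp ((-(Complex.I * θ)) • C) with hF
  have hFE : F * E = 1 := by
    rw [hE, hF, neg_smul, ← Matrix.exp_add_of_commute _ _ ((Commute.refl ((Complex.I * θ) • C)).neg_left), neg_add_cancel, exp_zero]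
  have hEF : E * F = 1 := by
    rw [hE, hF, neg_smul, ← Matrix.exp_add_of_commute _ _ ((Commute.refl ((Complex.I * θ) • C)).neg_right), add_neg_cancel, exp_zero]
  calc F * A * E = F * (E * ((Real.cos θ : ℂ) • A + (Real.sin θ : ℂ) • B) * F) * E := by
        rw [key]
    _ = (F * E) * ((Real.cos θ : ℂ) • A + (Real.sin θ : ℂ) • B) * (F * E) := by
        noncomm_ring
    _ = (Real.cos θ : ℂ) • A + (Real.sin θ : ℂ) • B := by rw [hFE]; simp
end main
end

section
/- Let R be a unital complex *-ring and let ψ : Fin N → R satisfy the canonical anticommutation relations (CAR). Fix an index i, write n_j := ψ_j* ψ_j, and define the particle-hole element u := (∏_{j ≠ i} (1 − 2 n_j)) · (ψ_i* + ψ_i), where the factors 1 − 2 n_j pairwise commute so that the product is independent of the order. Then: (i) u is self-adjoint, u* = u; (ii) u is a unitary involution, u² = 1 (hence u* u = u u* = 1); (iii) u* ψ_i u = ψ_i*; and (iv) u* ψ_j u = ψ_j for every j ≠ i. -/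
/-- Let `ψ : Fin N → R` be a CAR family in a unital complex *-ring,
fix `i`, put `n_j := ψ_j* ψ_j` and define the particle-hole element
`u := (∏_{j ≠ i} (1 − 2 n_j)) · (ψ_i* + ψ_i)` (the factors `1 − 2 n_j` pairwise
commute, so any fixed order may be used for the product; here the product is taken
in the order of the indices).  Then `u` is a self-adjoint unitary involution that
conjugates `ψ_i` to `ψ_i*` and fixes every `ψ_j` with `j ≠ i`. -/
theorem car_particle_hole_involution
    {R : Type*} [Ring R] [StarRing R] [Algebra ℂ R]
    {N : ℕ} (ψ : Fin N → R)
    (hcar₁ : ∀ i j, ψ i * ψ j + ψ j * ψ i = 0)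
    (hcar₂ : ∀ i j, ψ i * star (ψ j) + star (ψ j) * ψ i = if i = j then (1 : R) else 0)
    (i : Fin N) (u : R)
    (hu : u = (((List.finRange N).filter (fun j => j ≠ i)).map
        (fun j => (1 : R) - 2 * (star (ψ j) * ψ j))).prod * (star (ψ i) + ψ i)) :
    star u = u ∧ u * u = 1 ∧ star u * u = 1 ∧ u * star u = 1 ∧
      star u * ψ i * u = star (ψ i) ∧ ∀ j, j ≠ i → star u * ψ j * u = ψ j := by
  -- dividing by 2
  have half : ∀ x : R, x + x = 0 → x = 0 := by
    intro x hx
    have h1 : (algebraMap ℂ R (1/2)) * ((2:R) * x) = x := by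
      rw [← mul_assoc, (map_ofNat (algebraMap ℂ R) 2).symm, ← map_mul]
      norm_num
    rw [two_mul, hx, mul_zero] at h1
    exact h1.symm
  have hsq : ∀ j, ψ j * ψ j = 0 := fun j => half _ (hcar₁ j j)
  have hssq : ∀ j, star (ψ j) * star (ψ j) = 0 := by
    intro j
    have := congrArg star (hsq j)
    simpa [star_mul] using this
  have hmix : ∀ j, ψ j * star (ψ j) = 1 - star (ψ j) * ψ j := by
    intro j
    have h := hcar₂ j j
    rw [if_pos rfl] at h
    exact eq_sub_of_add_eq h
  have hA : ∀ j k, ψ j * ψ k = -(ψ k * ψ j) :=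
    fun j k => eq_neg_of_add_eq_zero_left (hcar₁ j k)
  have hB : ∀ j k, j ≠ k → ψ j * star (ψ k) = -(star (ψ k) * ψ j) := by
    intro j k h
    have h' := hcar₂ j k
    rw [if_neg h] at h'
    exact eq_neg_of_add_eq_zero_left h'
  have hSA : ∀ j k, star (ψ j) * star (ψ k) = -(star (ψ k) * star (ψ j)) := by
    intro j k
    have h' := congrArg star (hcar₁ k j)
    simp only [star_add, star_mul, star_zero] at h'
    exact eq_neg_of_add_eq_zero_left h'
  have hSB : ∀ j k, j ≠ k → star (ψ j) * ψ k = -(ψ k * star (ψ j)) := by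
    intro j k h
    have h' := hcar₂ k j
    rw [if_neg (Ne.symm h)] at h'
    exact eq_neg_of_add_eq_zero_right h'
  set F : Fin N → R := fun j => (1 : R) - 2 * (star (ψ j) * ψ j) with hF
  have hnn : ∀ j, (star (ψ j) * ψ j) * (star (ψ j) * ψ j) = star (ψ j) * ψ j := by
    intro j
    calc (star (ψ j) * ψ j) * (star (ψ j) * ψ j)
        = star (ψ j) * (ψ j * star (ψ j)) * ψ j := by noncomm_ring
      _ = star (ψ j) * (1 - star (ψ j) * ψ j) * ψ j := by rw [hmix]
      _ = star (ψ j) * ψ j - (star (ψ j) * star (ψ j)) * (ψ j * ψ j) := by noncomm_ring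
      _ = star (ψ j) * ψ j := by rw [hsq, mul_zero, sub_zero]
  have hFstar : ∀ j, star (F j) = F j := by
    intro j
    simp only [hF, star_sub, star_one, star_mul, star_star, star_ofNat]
    rw [(Commute.ofNat_left 2 (star (ψ j) * ψ j)).eq]
  have hFsq : ∀ j, F j * F j = 1 := by
    intro j
    simp only [hF]
    calc (1 - 2*(star (ψ j)*ψ j)) * (1 - 2*(star (ψ j)*ψ j))
        = 1 - 4*(star (ψ j)*ψ j) + 4*((star (ψ j)*ψ j)*(star (ψ j)*ψ j)) := by noncomm_ring
      _ = 1 - 4*(star (ψ j)*ψ j) + 4*(star (ψ j)*ψ j) := by rw [hnn]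
      _ = 1 := by noncomm_ring
  have hncomm : ∀ j k, j ≠ k →
      (star (ψ j)*ψ j) * (star (ψ k)*ψ k) = (star (ψ k)*ψ k) * (star (ψ j)*ψ j) := by
    intro j k h
    calc (star (ψ j)*ψ j) * (star (ψ k)*ψ k)
        = star (ψ j) * (ψ j * star (ψ k)) * ψ k := by noncomm_ring
      _ = star (ψ j) * (-(star (ψ k) * ψ j)) * ψ k := by rw [hB j k h]
      _ = -((star (ψ j) * star (ψ k)) * (ψ j * ψ k)) := by noncomm_ring
      _ = -((-(star (ψ k) * star (ψ j))) * (-(ψ k * ψ j))) := by rw [hSA j k, hA j k]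
      _ = -(star (ψ k) * (star (ψ j) * ψ k) * ψ j) := by noncomm_ring
      _ = -(star (ψ k) * (-(ψ k * star (ψ j))) * ψ j) := by rw [hSB j k h]
      _ = (star (ψ k)*ψ k) * (star (ψ j)*ψ j) := by noncomm_ring
  have hFcomm : ∀ j k, F j * F k = F k * F j := by
    intro j k
    rcases eq_or_ne j k with rfl | h
    · rfl
    · simp only [hF]
      calc (1 - 2*(star (ψ j)*ψ j)) * (1 - 2*(star (ψ k)*ψ k))
          = 1 - 2*(star (ψ j)*ψ j) - 2*(star (ψ k)*ψ k)
              + 4*((star (ψ j)*ψ j)*(star (ψ k)*ψ k)) := by noncomm_ring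
        _ = 1 - 2*(star (ψ j)*ψ j) - 2*(star (ψ k)*ψ k)
              + 4*((star (ψ k)*ψ k)*(star (ψ j)*ψ j)) := by rw [hncomm j k h]
        _ = (1 - 2*(star (ψ k)*ψ k)) * (1 - 2*(star (ψ j)*ψ j)) := by noncomm_ring
  have hψF : ∀ j k, k ≠ j → ψ k * F j = F j * ψ k := by
    intro j k h
    simp only [hF]
    have h1 : ψ k * (star (ψ j) * ψ j) = star (ψ j) * ψ j * ψ k := by
      calc ψ k * (star (ψ j) * ψ j) = (ψ k * star (ψ j)) * ψ j := by noncomm_ring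
        _ = (-(star (ψ j) * ψ k)) * ψ j := by rw [hB k j h]
        _ = -(star (ψ j) * (ψ k * ψ j)) := by noncomm_ring
        _ = -(star (ψ j) * (-(ψ j * ψ k))) := by rw [hA k j]
        _ = star (ψ j) * ψ j * ψ k := by noncomm_ring
    calc ψ k * (1 - 2*(star (ψ j)*ψ j)) = ψ k - 2*(ψ k * (star (ψ j)*ψ j)) := by noncomm_ring
      _ = ψ k - 2*(star (ψ j)*ψ j*ψ k) := by rw [h1]
      _ = (1 - 2*(star (ψ j)*ψ j)) * ψ k := by noncomm_ring
  have hsψF : ∀ j k, k ≠ j → star (ψ k) * F j = F j * star (ψ k) := by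
    intro j k h
    simp only [hF]
    have h1 : star (ψ k) * (star (ψ j) * ψ j) = star (ψ j) * ψ j * star (ψ k) := by
      calc star (ψ k) * (star (ψ j) * ψ j)
          = (star (ψ k) * star (ψ j)) * ψ j := by noncomm_ring
        _ = (-(star (ψ j) * star (ψ k))) * ψ j := by rw [hSA k j]
        _ = -(star (ψ j) * (star (ψ k) * ψ j)) := by noncomm_ring
        _ = -(star (ψ j) * (-(ψ j * star (ψ k)))) := by rw [hSB k j h]
        _ = star (ψ j) * ψ j * star (ψ k) := by noncomm_ring
    calc star (ψ k) * (1 - 2*(star (ψ j)*ψ j))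
        = star (ψ k) - 2*(star (ψ k) * (star (ψ j)*ψ j)) := by noncomm_ring
      _ = star (ψ k) - 2*(star (ψ j)*ψ j*star (ψ k)) := by rw [h1]
      _ = (1 - 2*(star (ψ j)*ψ j)) * star (ψ k) := by noncomm_ring
  have hFψ : ∀ j, F j * ψ j = ψ j := by
    intro j
    simp only [hF]
    calc (1 - 2*(star (ψ j)*ψ j)) * ψ j
        = ψ j - 2*(star (ψ j)*(ψ j*ψ j)) := by noncomm_ring
      _ = ψ j := by rw [hsq]; simp
  have hψF' : ∀ j, ψ j * F j = -ψ j := by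
    intro j
    simp only [hF]
    calc ψ j * (1 - 2*(star (ψ j)*ψ j))
        = ψ j - 2*((ψ j*star (ψ j))*ψ j) := by noncomm_ring
      _ = ψ j - 2*((1 - star (ψ j)*ψ j)*ψ j) := by rw [hmix]
      _ = -ψ j + 2*(star (ψ j)*(ψ j*ψ j)) := by noncomm_ring
      _ = -ψ j := by rw [hsq]; simp
  -- list product lemmas
  have hPcomm : ∀ (l : List (Fin N)) (x : R), (∀ k ∈ l, x * F k = F k * x) →
      x * (l.map F).prod = (l.map F).prod * x := by
    intro l x hx
    induction l with
    | nil => simp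
    | cons a t ih =>
      simp only [List.map_cons, List.prod_cons]
      rw [← mul_assoc, hx a (by simp), mul_assoc, ih (fun k hk => hx k (by simp [hk]))]
      exact (mul_assoc _ _ _).symm
  have hPstar : ∀ l : List (Fin N), star ((l.map F).prod) = (l.map F).prod := by
    intro l
    induction l with
    | nil => simp
    | cons a t ih =>
      simp only [List.map_cons, List.prod_cons, star_mul, ih, hFstar]
      exact (hPcomm t (F a) (fun k _ => hFcomm a k)).symm
  have hPP : ∀ l : List (Fin N), (l.map F).prod * (l.map F).prod = 1 := by
    intro l
    induction l with
    | nil => simp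
    | cons a t ih =>
      simp only [List.map_cons, List.prod_cons]
      have hc := hPcomm t (F a) (fun k _ => hFcomm a k)
      calc F a * (t.map F).prod * (F a * (t.map F).prod)
          = F a * ((t.map F).prod * F a) * (t.map F).prod := by noncomm_ring
        _ = F a * (F a * (t.map F).prod) * (t.map F).prod := by rw [← hc]
        _ = (F a * F a) * ((t.map F).prod * (t.map F).prod) := by noncomm_ring
        _ = 1 := by rw [hFsq, ih, one_mul]
  have hLmem : ∀ j, j ∈ (List.finRange N).filter (fun j => j ≠ i) ↔ j ≠ i := by
    intro j
    simp [List.mem_filter]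
  set L : List (Fin N) := (List.finRange N).filter (fun j => j ≠ i) with hL
  set P : R := (L.map F).prod with hP
  set v : R := star (ψ i) + ψ i with hv
  have hψiP : ψ i * P = P * ψ i := by
    rw [hP]
    exact hPcomm L (ψ i) (fun k hk => hψF k i (Ne.symm ((hLmem k).mp hk)))
  have hsψiP : star (ψ i) * P = P * star (ψ i) := by
    rw [hP]
    exact hPcomm L (star (ψ i)) (fun k hk => hsψF k i (Ne.symm ((hLmem k).mp hk)))
  have hvP : v * P = P * v := by
    rw [hv, add_mul, hψiP, hsψiP, mul_add]
  have hPstar' : star P = P := by rw [hP]; exact hPstar L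
  have hPP' : P * P = 1 := by rw [hP]; exact hPP L
  have hψjP : ∀ j, j ≠ i → ψ j * P = -(P * ψ j) := by
    intro j hj
    obtain ⟨s, t, hst⟩ := List.append_of_mem ((hLmem j).mpr hj)
    have hnd : L.Nodup := by
      rw [hL]; exact (List.nodup_finRange N).filter _
    rw [hst] at hnd
    rw [List.nodup_append] at hnd
    have hjs : j ∉ s := fun h => hnd.2.2 j h j (by simp) rfl
    have hjt : j ∉ t := by
      have := hnd.2.1
      rw [List.nodup_cons] at this
      exact this.1
    have hs : ψ j * (s.map F).prod = (s.map F).prod * ψ j :=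
      hPcomm s (ψ j) (fun k hk => hψF k j (fun h => hjs (h ▸ hk)))
    have ht : ψ j * (t.map F).prod = (t.map F).prod * ψ j :=
      hPcomm t (ψ j) (fun k hk => hψF k j (fun h => hjt (h ▸ hk)))
    rw [hP, hst]
    simp only [List.map_append, List.prod_append, List.map_cons, List.prod_cons]
    calc ψ j * ((s.map F).prod * (F j * (t.map F).prod))
        = (ψ j * (s.map F).prod) * F j * (t.map F).prod := by noncomm_ring
      _ = ((s.map F).prod * ψ j) * F j * (t.map F).prod := by rw [hs]
      _ = (s.map F).prod * (ψ j * F j) * (t.map F).prod := by noncomm_ring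
      _ = (s.map F).prod * (-ψ j) * (t.map F).prod := by rw [hψF']
      _ = -((s.map F).prod * (ψ j * (t.map F).prod)) := by noncomm_ring
      _ = -((s.map F).prod * ((F j * ψ j) * (t.map F).prod)) := by rw [hFψ]
      _ = -((s.map F).prod * (F j * (ψ j * (t.map F).prod))) := by noncomm_ring
      _ = -((s.map F).prod * (F j * ((t.map F).prod * ψ j))) := by rw [ht]
      _ = -((s.map F).prod * (F j * (t.map F).prod) * ψ j) := by noncomm_ring
  have hvψj : ∀ j, j ≠ i → v * ψ j = -(ψ j * v) := by
    intro j hj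
    rw [hv]
    calc (star (ψ i) + ψ i) * ψ j
        = star (ψ i) * ψ j + ψ i * ψ j := by noncomm_ring
      _ = -(ψ j * star (ψ i)) + -(ψ j * ψ i) := by
            rw [hSB i j (Ne.symm hj), hA i j]
      _ = -(ψ j * (star (ψ i) + ψ i)) := by noncomm_ring
  have hvv : v * v = 1 := by
    rw [hv]
    calc (star (ψ i) + ψ i) * (star (ψ i) + ψ i)
        = star (ψ i) * star (ψ i) + star (ψ i) * ψ i
            + ψ i * star (ψ i) + ψ i * ψ i := by noncomm_ring
      _ = 0 + star (ψ i) * ψ i + (1 - star (ψ i) * ψ i) + 0 := by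
            rw [hssq, hsq, hmix]
      _ = 1 := by noncomm_ring
  have hvstar : star v = v := by
    rw [hv, star_add, star_star, add_comm]
  have huPv : u = P * v := hu
  have hustar : star u = u := by
    rw [huPv, star_mul, hvstar, hPstar', hvP]
  have huu : u * u = 1 := by
    rw [huPv]
    calc (P * v) * (P * v) = P * (v * P) * v := by noncomm_ring
      _ = P * (P * v) * v := by rw [hvP]
      _ = (P * P) * (v * v) := by noncomm_ring
      _ = 1 := by rw [hPP', hvv, one_mul]
  have hviv : v * ψ i * v = star (ψ i) := by
    rw [hv]
    calc (star (ψ i) + ψ i) * ψ i * (star (ψ i) + ψ i)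
        = star (ψ i) * (ψ i * star (ψ i)) + star (ψ i) * (ψ i * ψ i)
            + (ψ i * ψ i) * star (ψ i) + (ψ i * ψ i) * ψ i := by noncomm_ring
      _ = star (ψ i) * (1 - star (ψ i) * ψ i) + star (ψ i) * 0
            + 0 * star (ψ i) + 0 * ψ i := by rw [hsq, hmix]
      _ = star (ψ i) - (star (ψ i) * star (ψ i)) * ψ i := by noncomm_ring
      _ = star (ψ i) := by rw [hssq]; noncomm_ring
  have hgoal5 : star u * ψ i * u = star (ψ i) := by
    rw [hustar, huPv]
    have hvψiP : (v * ψ i) * P = P * (v * ψ i) := by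
      rw [mul_assoc, hψiP, ← mul_assoc, hvP, mul_assoc]
    calc (P * v) * ψ i * (P * v)
        = P * ((v * ψ i) * P) * v := by noncomm_ring
      _ = P * (P * (v * ψ i)) * v := by rw [hvψiP]
      _ = (P * P) * (v * ψ i * v) := by noncomm_ring
      _ = v * ψ i * v := by rw [hPP', one_mul]
      _ = star (ψ i) := hviv
  refine ⟨hustar, huu, by rw [hustar]; exact huu, by rw [hustar]; exact huu, hgoal5, ?_⟩
  intro j hj
  rw [hustar, huPv]
  calc (P * v) * ψ j * (P * v)
      = P * (v * ψ j) * (P * v) := by noncomm_ring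
    _ = P * (-(ψ j * v)) * (P * v) := by rw [hvψj j hj]
    _ = -(P * (ψ j * (v * P)) * v) := by noncomm_ring
    _ = -(P * (ψ j * (P * v)) * v) := by rw [hvP]
    _ = -(P * (ψ j * P) * (v * v)) := by noncomm_ring
    _ = -(P * (ψ j * P)) := by rw [hvv, mul_one]
    _ = -(P * (-(P * ψ j))) := by rw [hψjP j hj]
    _ = (P * P) * ψ j := by noncomm_ring
    _ = ψ j := by rw [hPP', one_mul]
end

section
/- Let ψ : Fin N → M_m(ℂ) be a family of m×m complex matrices satisfying the canonical anticommutation relations (CAR), and let A be an N×N complex matrix. Define T := ∑_{j,k} A_{jk} · ψ_j* ψ_k. Then the unitary (when A is Hermitian) or invertible conjugation by exp(iT) implements the one-body transformation exp(iA): for every j, exp(−iT) · ψ_j · exp(iT) = ∑_{k} (exp(iA))_{jk} · ψ_k. -/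
open Matrix NormedSpace MulOpposite

attribute [local instance] Matrix.linftyOpNormedRing Matrix.linftyOpNormedAlgebra

namespace CarAux

variable {m N : ℕ}

attribute [-instance] instTopologicalSpaceMatrix Matrix.instUniformSpace

noncomputable def lmulA (m : ℕ) :
    Matrix (Fin m) (Fin m) ℂ →ₐ[ℂ] (Matrix (Fin m) (Fin m) ℂ →L[ℂ] Matrix (Fin m) (Fin m) ℂ) where
  toFun a := ContinuousLinearMap.mul ℂ (Matrix (Fin m) (Fin m) ℂ) a
  map_one' := by ext x : 1; simp
  map_mul' a b := by ext x : 1; simp [mul_assoc]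
  map_zero' := by ext x : 1; simp
  map_add' a b := by ext x : 1; simp [add_mul]
  commutes' c := by
    ext x : 1
    simp [Algebra.algebraMap_eq_smul_one, smul_mul_assoc]

noncomputable def rmulA (m : ℕ) :
    (Matrix (Fin m) (Fin m) ℂ)ᵐᵒᵖ →ₐ[ℂ] (Matrix (Fin m) (Fin m) ℂ →L[ℂ] Matrix (Fin m) (Fin m) ℂ) where
  toFun a := (ContinuousLinearMap.mul ℂ (Matrix (Fin m) (Fin m) ℂ)).flip a.unop
  map_one' := by ext x : 1; simp
  map_mul' a b := by ext x : 1; simp [mul_assoc]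
  map_zero' := by ext x : 1; simp
  map_add' a b := by ext x : 1; simp [mul_add]
  commutes' c := by
    ext x : 1
    simp [Algebra.algebraMap_eq_smul_one, mul_smul_comm]

@[simp] lemma lmulA_apply (a x : Matrix (Fin m) (Fin m) ℂ) : lmulA m a x = a * x := rfl
@[simp] lemma rmulA_apply (a : (Matrix (Fin m) (Fin m) ℂ)ᵐᵒᵖ) (x : Matrix (Fin m) (Fin m) ℂ) :
    rmulA m a x = x * a.unop := rfl

lemma continuous_lmulA : Continuous (lmulA m) :=
  (ContinuousLinearMap.mul ℂ (Matrix (Fin m) (Fin m) ℂ)).continuous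

lemma continuous_rmulA : Continuous (rmulA m) :=
  (ContinuousLinearMap.mul ℂ (Matrix (Fin m) (Fin m) ℂ)).flip.continuous.comp
    MulOpposite.continuous_unop

set_option maxHeartbeats 1000000 in
lemma exp_lmulA (x : Matrix (Fin m) (Fin m) ℂ) :
    lmulA m (NormedSpace.exp x) = NormedSpace.exp (lmulA m x) := by
  have h := NormedSpace.map_exp (lmulA m).toRingHom continuous_lmulA x
  exact h

set_option maxHeartbeats 1000000 in
lemma exp_rmulA (x : (Matrix (Fin m) (Fin m) ℂ)ᵐᵒᵖ) :
    rmulA m (NormedSpace.exp x) = NormedSpace.exp (rmulA m x) := by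
  have h := NormedSpace.map_exp (rmulA m).toRingHom continuous_rmulA x
  exact h

theorem car_aux
    {N m : ℕ} (ψ : Fin N → Matrix (Fin m) (Fin m) ℂ)
    (hcar₁ : ∀ i j, ψ i * ψ j + ψ j * ψ i = 0)
    (hcar₂ : ∀ i j, ψ i * star (ψ j) + star (ψ j) * ψ i
      = if i = j then (1 : Matrix (Fin m) (Fin m) ℂ) else 0)
    (A : Matrix (Fin N) (Fin N) ℂ)
    (T : Matrix (Fin m) (Fin m) ℂ)
    (hT : T = ∑ j, ∑ k, A j k • (star (ψ j) * ψ k))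
    (j : Fin N) :
    NormedSpace.exp ((-Complex.I) • T) * ψ j * NormedSpace.exp (Complex.I • T)
      = ∑ k, (NormedSpace.exp (Complex.I • A)) j k • ψ k := by
  classical
  have key : ∀ i p q, ψ i * (star (ψ p) * ψ q) - star (ψ p) * ψ q * ψ i
      = if i = p then ψ q else 0 := by
    intro i p q
    have e2 : ψ i * star (ψ p)
        = (if i = p then (1 : Matrix (Fin m) (Fin m) ℂ) else 0) - star (ψ p) * ψ i :=
      eq_sub_of_add_eq (hcar₂ i p)
    have e1 : ψ q * ψ i = -(ψ i * ψ q) :=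
      eq_neg_of_add_eq_zero_left (hcar₁ q i)
    have h0 : ψ i * (star (ψ p) * ψ q) - star (ψ p) * ψ q * ψ i
        = (ψ i * star (ψ p)) * ψ q - star (ψ p) * (ψ q * ψ i) := by noncomm_ring
    rw [h0, e2, e1]
    split_ifs <;> noncomm_ring
  have hcomm : ∀ i, ψ i * T - T * ψ i = ∑ k, A i k • ψ k := by
    intro i
    have h1 : ψ i * T - T * ψ i
        = ∑ p, ∑ q, A p q • (ψ i * (star (ψ p) * ψ q) - star (ψ p) * ψ q * ψ i) := by
      rw [hT]
      simp only [Finset.mul_sum, Finset.sum_mul, mul_smul_comm, smul_mul_assoc, smul_sub,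
        ← Finset.sum_sub_distrib]
    rw [h1]
    simp only [key]
    rw [Finset.sum_eq_single i]
    · simp
    · intro p _ hp
      simp [if_neg (Ne.symm hp)]
    · intro h
      exact absurd (Finset.mem_univ i) h
  set D : (Matrix (Fin m) (Fin m) ℂ →L[ℂ] Matrix (Fin m) (Fin m) ℂ) :=
    lmulA m ((-Complex.I) • T) + rmulA m (op (Complex.I • T)) with hD
  have hDapp : ∀ i, D (ψ i) = ∑ k, (Complex.I • A) i k • ψ k := by
    intro i
    have h : D (ψ i) = ((-Complex.I) • T) * ψ i + ψ i * (Complex.I • T) := rfl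
    rw [h, smul_mul_assoc, mul_smul_comm, neg_smul, neg_add_eq_sub, ← smul_sub, hcomm i,
      Finset.smul_sum]
    simp [smul_smul]
  have hDpow : ∀ n i, (D ^ n) (ψ i) = ∑ k, ((Complex.I • A) ^ n) i k • ψ k := by
    intro n
    induction n with
    | zero =>
      intro i
      simp [Matrix.one_apply, ite_smul, Finset.sum_ite_eq]
    | succ n ih =>
      intro i
      rw [pow_succ', ContinuousLinearMap.mul_apply, ih, map_sum]
      simp only [_root_.map_smul, hDapp, Finset.smul_sum, smul_smul]
      rw [Finset.sum_comm]
      refine Finset.sum_congr rfl fun l _ => ?_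
      rw [← Finset.sum_smul, pow_succ, Matrix.mul_apply]
  set Φlin : Matrix (Fin N) (Fin N) ℂ →ₗ[ℂ] Matrix (Fin m) (Fin m) ℂ :=
    { toFun := fun B => ∑ k, B j k • ψ k
      map_add' := by intros; simp [add_smul, Finset.sum_add_distrib]
      map_smul' := by intros; simp [smul_smul, Finset.smul_sum] } with hΦlin
  set Φ : Matrix (Fin N) (Fin N) ℂ →L[ℂ] Matrix (Fin m) (Fin m) ℂ :=
    LinearMap.toContinuousLinearMap Φlin with hΦ
  have hΦapp : ∀ B, Φ B = ∑ k, B j k • ψ k := fun B => rfl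
  have hLR : Commute (lmulA m ((-Complex.I) • T)) (rmulA m (op (Complex.I • T))) := by
    ext x
    simp [mul_assoc]
  have hadd : NormedSpace.exp D
      = NormedSpace.exp (lmulA m ((-Complex.I) • T))
        * NormedSpace.exp (rmulA m (op (Complex.I • T))) := by
    rw [hD]
    letI : NormedAlgebra ℚ (Matrix (Fin m) (Fin m) ℂ →L[ℂ] Matrix (Fin m) (Fin m) ℂ) :=
      NormedAlgebra.restrictScalars ℚ ℂ _
    have h := NormedSpace.exp_add_of_commute
      (𝔸 := Matrix (Fin m) (Fin m) ℂ →L[ℂ] Matrix (Fin m) (Fin m) ℂ)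
      (x := lmulA m ((-Complex.I) • T)) (y := rmulA m (op (Complex.I • T))) hLR
    convert h using 2
  have step1 : NormedSpace.exp ((-Complex.I) • T) * ψ j * NormedSpace.exp (Complex.I • T)
      = NormedSpace.exp D (ψ j) := by
    have h1 : NormedSpace.exp ((-Complex.I) • T) * ψ j * NormedSpace.exp (Complex.I • T)
        = lmulA m (NormedSpace.exp ((-Complex.I) • T))
            (rmulA m (op (NormedSpace.exp (Complex.I • T))) (ψ j)) := by
      simp [mul_assoc]
    rw [h1, ← NormedSpace.exp_op (Complex.I • T), exp_lmulA, exp_rmulA,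
      ← ContinuousLinearMap.mul_apply, ← hadd]
  have hsumD : Summable (fun n : ℕ => ((n.factorial : ℂ))⁻¹ • D ^ n) :=
    NormedSpace.expSeries_summable' D
  have hsumA : Summable (fun n : ℕ => ((n.factorial : ℂ))⁻¹ • (Complex.I • A) ^ n) :=
    NormedSpace.expSeries_summable' (Complex.I • A)
  have step2 : NormedSpace.exp D (ψ j) = Φ (NormedSpace.exp (Complex.I • A)) := by
    rw [NormedSpace.exp_eq_tsum ℂ, NormedSpace.exp_eq_tsum ℂ, ContinuousLinearMap.map_tsum Φ hsumA]
    have h2 : (∑' n : ℕ, ((n.factorial : ℂ))⁻¹ • D ^ n) (ψ j)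
        = ∑' n : ℕ, (((n.factorial : ℂ))⁻¹ • D ^ n) (ψ j) := by
      simpa using ContinuousLinearMap.map_tsum
        (ContinuousLinearMap.apply ℂ (Matrix (Fin m) (Fin m) ℂ) (ψ j)) hsumD
    rw [h2]
    refine tsum_congr fun n => ?_
    rw [ContinuousLinearMap.smul_apply, hDpow, _root_.map_smul, hΦapp]
  rw [step1, step2, hΦapp]

end CarAux

open CarAux

/-- Let `ψ : Fin N → M_m(ℂ)` satisfy the CAR and let `A` be an `N × N`
complex matrix.  With `T := ∑ⱼₖ Aⱼₖ • ψⱼ* ψₖ`, conjugation by `exp(iT)` implements the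
one-body transformation `exp(iA)`:
`exp(−iT) ψⱼ exp(iT) = ∑ₖ (exp(iA))ⱼₖ • ψₖ` for every `j`. -/
theorem car_bogoliubov_rotation
    {N m : ℕ} (ψ : Fin N → Matrix (Fin m) (Fin m) ℂ)
    (hcar₁ : ∀ i j, ψ i * ψ j + ψ j * ψ i = 0)
    (hcar₂ : ∀ i j, ψ i * star (ψ j) + star (ψ j) * ψ i
      = if i = j then (1 : Matrix (Fin m) (Fin m) ℂ) else 0)
    (A : Matrix (Fin N) (Fin N) ℂ)
    (T : Matrix (Fin m) (Fin m) ℂ)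
    (hT : T = ∑ j, ∑ k, A j k • (star (ψ j) * ψ k))
    (j : Fin N) :
    NormedSpace.exp ((-Complex.I) • T) * ψ j * NormedSpace.exp (Complex.I • T)
      = ∑ k, (NormedSpace.exp (Complex.I • A)) j k • ψ k := by
  exact car_aux ψ hcar₁ hcar₂ A T hT j
end

section
/- Let D be an n×n Hermitian complex matrix. Then exp(−D²) = (4π)^{−1/2} ∫_ℝ exp(−k²/4) · exp(i k D) dk, where the integral is the Bochner integral of the matrix-valued function k ↦ exp(−k²/4) exp(ikD) over ℝ. -/
open Matrix MeasureTheory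

attribute [local instance] Matrix.normedAddCommGroup Matrix.normedSpace

open Complex in
private lemma gaussianAux_exp_unitary_conj {n : ℕ} (U : Matrix.unitaryGroup (Fin n) ℂ)
    (M : Matrix (Fin n) (Fin n) ℂ) :
    NormedSpace.exp ((U : Matrix (Fin n) (Fin n) ℂ) * M * star (U : Matrix (Fin n) (Fin n) ℂ))
      = (U : Matrix (Fin n) (Fin n) ℂ) * NormedSpace.exp M
          * star (U : Matrix (Fin n) (Fin n) ℂ) := by
  let u : (Matrix (Fin n) (Fin n) ℂ)ˣ :=
    ⟨U, star (U : Matrix (Fin n) (Fin n) ℂ), Unitary.coe_mul_star_self U,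
      Unitary.coe_star_mul_self U⟩
  exact Matrix.exp_units_conj u M

noncomputable def gaussianAux_L {n : ℕ} (U : Matrix (Fin n) (Fin n) ℂ) :
    (Fin n → ℂ) →L[ℝ] Matrix (Fin n) (Fin n) ℂ :=
  LinearMap.toContinuousLinearMap
    { toFun := fun v => U * Matrix.diagonal v * star U
      map_add' := by
        intro v w
        rw [show Matrix.diagonal (v + w)
            = Matrix.diagonal v + Matrix.diagonal w by rw [Matrix.diagonal_add]; rfl,
          Matrix.mul_add, Matrix.add_mul]
      map_smul' := by
        intro c v
        rw [Matrix.diagonal_smul, mul_smul_comm, smul_mul_assoc, RingHom.id_apply] }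

@[simp] lemma gaussianAux_L_apply {n : ℕ} (U : Matrix (Fin n) (Fin n) ℂ) (v : Fin n → ℂ) :
    gaussianAux_L U v = U * Matrix.diagonal v * star U := rfl

/-- For an `n × n` Hermitian complex matrix `D`,
`exp(−D²) = (4π)^{−1/2} ∫_ℝ exp(−k²/4) exp(ikD) dk`,
the integral being the Bochner integral of the matrix-valued function
`k ↦ exp(−k²/4) exp(ikD)` over `ℝ`. -/
theorem exp_neg_sq_eq_gaussian_integral
    {n : ℕ} (D : Matrix (Fin n) (Fin n) ℂ) (hD : D.IsHermitian) :
    NormedSpace.exp (-(D * D))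
      = (Real.sqrt (4 * Real.pi))⁻¹ •
          ∫ k : ℝ, Real.exp (-(k ^ 2) / 4) • NormedSpace.exp ((Complex.I * k) • D) := by
  classical
  set U : Matrix (Fin n) (Fin n) ℂ := (hD.eigenvectorUnitary : Matrix (Fin n) (Fin n) ℂ) with hU
  set μ : Fin n → ℝ := hD.eigenvalues with hμ
  have hUU : star U * U = 1 := Unitary.coe_star_mul_self hD.eigenvectorUnitary
  have h_spec : D = U * Matrix.diagonal (fun i => (μ i : ℂ)) * star U := by
    exact hD.spectral_theorem
  have hconj : ∀ A B : Matrix (Fin n) (Fin n) ℂ,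
      (U * A * star U) * (U * B * star U) = U * (A * B) * star U := by
    intro A B
    calc (U * A * star U) * (U * B * star U)
        = U * A * ((star U * U) * (B * star U)) := by simp only [Matrix.mul_assoc]
      _ = U * (A * B) * star U := by
          rw [hUU, one_mul, ← Matrix.mul_assoc, ← Matrix.mul_assoc]
  -- exp of a conjugated diagonal
  have hUdiag : ∀ v : Fin n → ℂ,
      NormedSpace.exp (U * Matrix.diagonal v * star U)
        = U * Matrix.diagonal (fun i => Complex.exp (v i)) * star U := by
    intro v
    rw [gaussianAux_exp_unitary_conj hD.eigenvectorUnitary, Matrix.exp_diagonal]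
    have hv : NormedSpace.exp v = fun i => Complex.exp (v i) := by
      rw [Pi.exp_def]
      funext i
      exact (congrFun Complex.exp_eq_exp_ℂ _).symm
    rw [hv]
  -- LHS
  have hLHS : NormedSpace.exp (-(D * D))
      = U * Matrix.diagonal (fun i => Complex.exp (-((μ i : ℂ) * (μ i : ℂ)))) * star U := by
    have hDD : -(D * D) = U * Matrix.diagonal (fun i => -((μ i : ℂ) * (μ i : ℂ))) * star U := by
      rw [h_spec, hconj, Matrix.diagonal_mul_diagonal, ← Matrix.diagonal_neg, mul_neg, neg_mul]
    rw [hDD, hUdiag]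
  -- the vector-valued integrand
  set G : ℝ → (Fin n → ℂ) := fun k i =>
    Complex.exp (Complex.I * (μ i : ℂ) * (k : ℂ)) * Complex.exp (-(1/4 : ℂ) * (k : ℂ) ^ 2)
    with hG
  have hGcont : Continuous G := by
    apply continuous_pi
    intro i
    fun_prop
  have hGnorm : ∀ k : ℝ, ‖G k‖ ≤ Real.exp (-(1/4) * k ^ 2) := by
    intro k
    apply pi_norm_le_iff_of_nonneg (Real.exp_nonneg _) |>.mpr
    intro i
    simp only [hG, norm_mul, Complex.norm_exp]
    have h1 : (Complex.I * (μ i : ℂ) * (k : ℂ)).re = 0 := by simp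
    have h2 : (-(1/4 : ℂ) * (k : ℂ) ^ 2).re = -(1/4) * k ^ 2 := by
      simp [← Complex.ofReal_pow]
    rw [h1, h2, Real.exp_zero, one_mul]
  have hGint : Integrable G := by
    refine Integrable.mono' (integrable_exp_neg_mul_sq (by norm_num : (0:ℝ) < 1/4))
      hGcont.aestronglyMeasurable ?_
    filter_upwards with k using hGnorm k
  -- pointwise identification of the integrand
  have hpoint : (fun k : ℝ => Real.exp (-(k ^ 2) / 4) • NormedSpace.exp ((Complex.I * k) • D))
      = fun k : ℝ => gaussianAux_L U (G k) := by
    funext k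
    have hkD : (Complex.I * (k : ℂ)) • D
        = U * Matrix.diagonal (fun i => Complex.I * (μ i : ℂ) * (k : ℂ)) * star U := by
      rw [h_spec, ← smul_mul_assoc, ← mul_smul_comm, ← Matrix.diagonal_smul]
      have hv : ((Complex.I * (k : ℂ)) • fun i => ((μ i : ℂ)))
          = fun i => Complex.I * (μ i : ℂ) * (k : ℂ) := by
        funext i
        simp only [Pi.smul_apply, smul_eq_mul]
        ring
      rw [hv]
    rw [hkD, hUdiag, gaussianAux_L_apply, ← smul_mul_assoc, ← mul_smul_comm,
      ← Matrix.diagonal_smul]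
    have hv : (Real.exp (-(k ^ 2) / 4) • fun i => Complex.exp (Complex.I * (μ i : ℂ) * (k : ℂ)))
        = G k := by
      funext i
      simp only [hG, Pi.smul_apply, Complex.real_smul, Complex.ofReal_exp]
      rw [← Complex.exp_add, ← Complex.exp_add]
      congr 1
      push_cast
      ring
    rw [hv]
  -- compute the integral of G
  have hGval : (∫ k : ℝ, G k)
      = fun i => ((Real.sqrt (4 * Real.pi) : ℝ) : ℂ)
          * Complex.exp (-((μ i : ℂ) * (μ i : ℂ))) := by
    funext i
    have hproj : (∫ k : ℝ, G k) i = ∫ k : ℝ, G k i := by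
      have := (ContinuousLinearMap.proj (R := ℝ) (φ := fun _ : Fin n => ℂ) i).integral_comp_comm
        hGint
      simpa using this.symm
    rw [hproj]
    have hfour := fourierIntegral_gaussian (b := (1/4 : ℂ)) (by norm_num) ((μ i : ℂ))
    have hGi : (∫ k : ℝ, G k i)
        = ∫ x : ℝ, Complex.exp (Complex.I * (μ i : ℂ) * (x : ℂ))
            * Complex.exp (-(1/4 : ℂ) * (x : ℂ) ^ 2) := rfl
    rw [hGi, hfour]
    have hb : (↑Real.pi / (1/4 : ℂ)) = ((4 * Real.pi : ℝ) : ℂ) := by push_cast; ring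
    rw [hb]
    have hcpow : ((4 * Real.pi : ℝ) : ℂ) ^ (1/2 : ℂ) = ((Real.sqrt (4 * Real.pi) : ℝ) : ℂ) := by
      have h4π : (0:ℝ) ≤ 4 * Real.pi := by positivity
      rw [show (1/2 : ℂ) = ((1/2 : ℝ) : ℂ) by norm_num, ← Complex.ofReal_cpow h4π,
        Real.sqrt_eq_rpow]
    rw [hcpow]
    congr 1
    congr 1
    ring
  -- put it together
  rw [hpoint, show (∫ k : ℝ, gaussianAux_L U (G k)) = gaussianAux_L U (∫ k : ℝ, G k) from
      ContinuousLinearMap.integral_comp_comm (gaussianAux_L U) hGint, hGval, hLHS,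
    gaussianAux_L_apply]
  rw [show (Matrix.diagonal fun i => ((Real.sqrt (4 * Real.pi) : ℝ) : ℂ)
        * Complex.exp (-((μ i : ℂ) * (μ i : ℂ))))
      = ((Real.sqrt (4 * Real.pi) : ℝ) : ℂ)
        • Matrix.diagonal (fun i => Complex.exp (-((μ i : ℂ) * (μ i : ℂ)))) by
    rw [← Matrix.diagonal_smul]; rfl]
  rw [mul_smul_comm, smul_mul_assoc]
  have hrs : ∀ (r : ℝ) (M : Matrix (Fin n) (Fin n) ℂ), r • M = (r : ℂ) • M := by
    intro r M
    ext i j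
    simp [Complex.real_smul]
  rw [hrs, smul_smul]
  have hsqne : Real.sqrt (4 * Real.pi) ≠ 0 := by positivity
  rw [show (((Real.sqrt (4 * Real.pi))⁻¹ : ℝ) : ℂ) * ((Real.sqrt (4 * Real.pi) : ℝ) : ℂ) = 1 by
    rw [← Complex.ofReal_mul, inv_mul_cancel₀ hsqne, Complex.ofReal_one]]
  rw [one_smul]
end

section
/- Let D be an n×n Hermitian complex matrix. Then exp(D²) = (4π)^{−1/2} ∫_ℝ exp(−k²/4) · exp(k D) dk, where the integral is the Bochner integral of the matrix-valued function k ↦ exp(−k²/4) exp(kD) over ℝ. -/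
open Matrix MeasureTheory
attribute [local instance] Matrix.normedAddCommGroup Matrix.normedSpace

theorem myDiagSum {n : ℕ} (v : Fin n → ℂ) :
    Matrix.diagonal v = ∑ i, v i • Matrix.single i i (1:ℂ) := by
  ext a b
  rw [Matrix.sum_apply]
  simp only [Matrix.diagonal_apply, Matrix.smul_apply, Matrix.single, Matrix.of_apply]
  rcases eq_or_ne a b with h | h
  · subst h; simp [Finset.sum_ite_eq']
  · rw [if_neg h, Finset.sum_eq_zero]
    intro x _
    by_cases hx : x = a ∧ x = b
    · exact absurd (hx.1.symm.trans hx.2) h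
    · simp [hx]

theorem gauss_int (c : ℝ) : ∫ k : ℝ, Complex.exp (-(1/4:ℂ) * (k:ℂ)^2 + (c:ℂ) * k)
    = (Real.sqrt (4 * Real.pi) : ℂ) * Complex.exp ((c:ℂ)^2) := by
  have h : (-(1/4:ℂ)).re < 0 := by norm_num
  rw [show (fun k : ℝ => Complex.exp (-(1/4:ℂ) * (k:ℂ)^2 + (c:ℂ) * k))
      = (fun k : ℝ => Complex.exp (-(1/4:ℂ) * (k:ℂ)^2 + (c:ℂ) * k + 0)) by simp]
  rw [integral_cexp_quadratic h (c:ℂ) 0]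
  congr 1
  · rw [show (↑Real.pi / -(-(1/4:ℂ))) = ((4 * Real.pi : ℝ) : ℂ) by push_cast; ring,
      show (1/2 : ℂ) = ((1/2 : ℝ) : ℂ) by norm_num,
      ← Complex.ofReal_cpow (by positivity), ← Real.sqrt_eq_rpow]
  · congr 1
    field_simp
    ring

/-- For an `n × n` Hermitian complex matrix `D`,
`exp(D²) = (4π)^{−1/2} ∫_ℝ exp(−k²/4) exp(kD) dk`,
the integral being the Bochner integral of the matrix-valued function
`k ↦ exp(−k²/4) exp(kD)` over `ℝ`. -/
theorem exp_sq_eq_gaussian_integral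
    {n : ℕ} (D : Matrix (Fin n) (Fin n) ℂ) (hD : D.IsHermitian) :
    NormedSpace.exp (D * D)
      = (Real.sqrt (4 * Real.pi))⁻¹ •
          ∫ k : ℝ, Real.exp (-(k ^ 2) / 4) • NormedSpace.exp ((k : ℂ) • D) := by
  classical
  set u : Matrix (Fin n) (Fin n) ℂ := (hD.eigenvectorUnitary : Matrix (Fin n) (Fin n) ℂ) with hu_def
  have hmem := hD.eigenvectorUnitary.2
  have hu1 : u * star u = 1 := (Unitary.mem_iff.mp hmem).2
  have hu2 : star u * u = 1 := (Unitary.mem_iff.mp hmem).1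
  set U : (Matrix (Fin n) (Fin n) ℂ)ˣ := ⟨u, star u, hu1, hu2⟩ with hU_def
  set lam : Fin n → ℝ := hD.eigenvalues with hlam_def
  have hUinv : (↑U⁻¹ : Matrix (Fin n) (Fin n) ℂ) = star u := rfl
  have hspec : D = (U : Matrix (Fin n) (Fin n) ℂ) * Matrix.diagonal (fun i => (lam i : ℂ)) * ((U⁻¹ : (Matrix (Fin n) (Fin n) ℂ)ˣ) : Matrix (Fin n) (Fin n) ℂ) := by
    rw [hUinv]
    exact hD.spectral_theorem
  -- conjugation helper
  have hconj : ∀ v : Fin n → ℂ, NormedSpace.exp ((U : Matrix (Fin n) (Fin n) ℂ) * Matrix.diagonal v * ((U⁻¹ : (Matrix (Fin n) (Fin n) ℂ)ˣ) : Matrix (Fin n) (Fin n) ℂ))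
      = (U : Matrix (Fin n) (Fin n) ℂ) * Matrix.diagonal (fun i => Complex.exp (v i)) * ((U⁻¹ : (Matrix (Fin n) (Fin n) ℂ)ˣ) : Matrix (Fin n) (Fin n) ℂ) := by
    intro v
    rw [Matrix.exp_units_conj U, Matrix.exp_diagonal, Pi.exp_def, ← Complex.exp_eq_exp_ℂ]
  -- LHS
  have hDD : D * D = (U : Matrix (Fin n) (Fin n) ℂ) * Matrix.diagonal (fun i => ((lam i : ℂ))^2) * ((U⁻¹ : (Matrix (Fin n) (Fin n) ℂ)ˣ) : Matrix (Fin n) (Fin n) ℂ) := by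
    rw [hspec]
    rw [hUinv]
    have : Matrix.diagonal (fun i => ((lam i : ℂ))^2)
        = Matrix.diagonal (fun i => (lam i : ℂ)) * Matrix.diagonal (fun i => (lam i : ℂ)) := by
      rw [Matrix.diagonal_mul_diagonal]
      exact congrArg _ (funext fun i => pow_two _)
    rw [this]
    simp only [Matrix.mul_assoc]
    rw [show star u * (u * (Matrix.diagonal (fun i => (lam i:ℂ)) * star u))
        = Matrix.diagonal (fun i => (lam i:ℂ)) * star u by
      rw [← Matrix.mul_assoc, hu2, Matrix.one_mul]]
  have hLHS : NormedSpace.exp (D * D)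
      = (U : Matrix (Fin n) (Fin n) ℂ) * Matrix.diagonal (fun i => Complex.exp ((lam i:ℂ)^2)) * ((U⁻¹ : (Matrix (Fin n) (Fin n) ℂ)ˣ) : Matrix (Fin n) (Fin n) ℂ) := by
    rw [hDD, hconj]
  -- integrand
  have hsmulD : ∀ k : ℝ, (k:ℂ) • D = (U : Matrix (Fin n) (Fin n) ℂ) * Matrix.diagonal (fun i => (k:ℂ) * lam i) * ((U⁻¹ : (Matrix (Fin n) (Fin n) ℂ)ˣ) : Matrix (Fin n) (Fin n) ℂ) := by
    intro k
    have hfun : (k:ℂ) • (fun i => (lam i : ℂ)) = fun i => (k:ℂ) * (lam i : ℂ) := by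
      funext i; simp
    rw [hspec, ← smul_mul_assoc, ← mul_smul_comm, ← Matrix.diagonal_smul, hfun]
  have hint_eq : ∀ k : ℝ, Real.exp (-(k ^ 2) / 4) • NormedSpace.exp ((k : ℂ) • D)
      = (U : Matrix (Fin n) (Fin n) ℂ) * Matrix.diagonal (fun i => Complex.exp (-(1/4:ℂ) * (k:ℂ)^2 + (lam i:ℂ) * k)) * ((U⁻¹ : (Matrix (Fin n) (Fin n) ℂ)ˣ) : Matrix (Fin n) (Fin n) ℂ) := by
    intro k
    have hfun : Real.exp (-(k ^ 2) / 4) • (fun i => Complex.exp ((k:ℂ) * (lam i : ℂ)))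
        = fun i => Complex.exp (-(1/4:ℂ) * (k:ℂ)^2 + (lam i:ℂ) * k) := by
      funext i
      rw [Pi.smul_apply, Complex.real_smul, Complex.ofReal_exp, ← Complex.exp_add]
      congr 1
      push_cast
      ring
    rw [hsmulD, hconj, ← smul_mul_assoc, ← mul_smul_comm, ← Matrix.diagonal_smul, hfun]
  -- the continuous linear conjugation map
  let L0 : Matrix (Fin n) (Fin n) ℂ →ₗ[ℂ] Matrix (Fin n) (Fin n) ℂ :=
    { toFun := fun M => (U : Matrix (Fin n) (Fin n) ℂ) * M * ((U⁻¹ : (Matrix (Fin n) (Fin n) ℂ)ˣ) : Matrix (Fin n) (Fin n) ℂ)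
      map_add' := fun A B => by simp [Matrix.mul_add, Matrix.add_mul]
      map_smul' := fun c A => by simp [mul_smul_comm, smul_mul_assoc] }
  let L : Matrix (Fin n) (Fin n) ℂ →L[ℂ] Matrix (Fin n) (Fin n) ℂ :=
    LinearMap.toContinuousLinearMap L0
  -- diagonal integrand as a sum
  set g : ℝ → Fin n → ℂ := fun k i => Complex.exp (-(1/4:ℂ) * (k:ℂ)^2 + (lam i:ℂ) * k) with hg_def
  have hgsum : ∀ k : ℝ, Matrix.diagonal (g k) = ∑ i, g k i • Matrix.single i i (1:ℂ) :=
    fun k => myDiagSum (g k)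
  have hgi : ∀ i : Fin n, Integrable (fun k : ℝ => g k i) := by
    intro i
    have h : (0:ℝ) < ((1/4:ℂ)).re := by norm_num
    simpa [hg_def] using
      (integrable_cexp_quadratic h ((lam i : ℂ)) 0).congr (by
        filter_upwards with k
        simp)
  letI : ContinuousENorm (Matrix (Fin n) (Fin n) ℂ) := SeminormedAddGroup.toContinuousENorm
  have hInt : Integrable (fun k : ℝ => Matrix.diagonal (g k)) := by
    simp only [hgsum]
    have hsi := fun i => (hgi i).smul_const (Matrix.single i i (1:ℂ))
    exact integrable_finset_sum _ (fun i _ => hsi i)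
  have hIntDiag : (∫ k : ℝ, Matrix.diagonal (g k))
      = Matrix.diagonal (fun i => (Real.sqrt (4 * Real.pi) : ℂ) * Complex.exp ((lam i:ℂ)^2)) := by
    simp only [hgsum]
    rw [integral_finset_sum _ (fun i _ => (hgi i).smul_const _)]
    have hterm : ∀ i : Fin n, (∫ a : ℝ, g a i • Matrix.single i i (1:ℂ))
        = ((Real.sqrt (4 * Real.pi) : ℂ) * Complex.exp ((lam i:ℂ)^2)) • Matrix.single i i (1:ℂ) := by
      intro i
      rw [integral_smul_const]
      congr 1
      exact gauss_int (lam i)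
    rw [Finset.sum_congr rfl (fun i _ => hterm i), ← myDiagSum]
  -- put it together
  have hintg : (∫ k : ℝ, Real.exp (-(k ^ 2) / 4) • NormedSpace.exp ((k : ℂ) • D))
      = (U : Matrix (Fin n) (Fin n) ℂ) * Matrix.diagonal (fun i => (Real.sqrt (4 * Real.pi) : ℂ)
          * Complex.exp ((lam i:ℂ)^2)) * ((U⁻¹ : (Matrix (Fin n) (Fin n) ℂ)ˣ) : Matrix (Fin n) (Fin n) ℂ) := by
    have : (fun k : ℝ => Real.exp (-(k ^ 2) / 4) • NormedSpace.exp ((k : ℂ) • D))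
        = fun k => L (Matrix.diagonal (g k)) := by
      funext k
      rw [hint_eq k]
      rfl
    rw [this]
    refine (L.integral_comp_comm hInt).trans ?_
    rw [hIntDiag]
    rfl
  rw [hLHS, hintg]
  have hsq : (0:ℝ) < Real.sqrt (4 * Real.pi) := Real.sqrt_pos.mpr (by positivity)
  have hfun : (Real.sqrt (4 * Real.pi))⁻¹ • (fun i => (Real.sqrt (4 * Real.pi) : ℂ) * Complex.exp ((lam i:ℂ)^2))
      = fun i => Complex.exp ((lam i:ℂ)^2) := by
    funext i
    rw [Pi.smul_apply, Complex.real_smul, Complex.ofReal_inv, ← mul_assoc,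
      inv_mul_cancel₀ (by exact_mod_cast hsq.ne'), one_mul]
  rw [← smul_mul_assoc, ← mul_smul_comm, ← Matrix.diagonal_smul, hfun]
end

section
/- Let H be an n×n Hermitian complex matrix, let E₀ be its smallest eigenvalue, let P₀ be the orthogonal projection onto the eigenspace of H for E₀, and let d := rank P₀. Then for every n×n complex matrix A, lim_{β → ∞} Tr(A · exp(−βH)) / Tr(exp(−βH)) = Tr(P₀ A) / d. In other words, the thermal (Gibbs) expectation of A converges, as the inverse temperature β tends to infinity, to the average of A over the ground-state eigenspace. -/
open Matrix Filter

lemma trace_mul_diag {n : ℕ} (M : Matrix (Fin n) (Fin n) ℂ) (w : Fin n → ℂ) :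
    Matrix.trace (M * Matrix.diagonal w) = ∑ i, M i i * w i := by
  simp [Matrix.trace, Matrix.diag, Matrix.mul_diagonal]

/-- Let `H` be an `n × n` Hermitian complex matrix with smallest
eigenvalue `E₀`, let `P₀` be the orthogonal projection onto the `E₀`-eigenspace
(characterized by: `P₀` is a Hermitian idempotent whose range consists of
`E₀`-eigenvectors and which fixes every `E₀`-eigenvector), and let `d := rank P₀`.
Then for every `n × n` complex matrix `A`, as `β → ∞`,
`Tr(A e^{−βH}) / Tr(e^{−βH}) → Tr(P₀ A)/d`. -/
theorem tendsto_gibbs_expectation_ground_state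
    {n : ℕ} (H : Matrix (Fin n) (Fin n) ℂ) (hH : H.IsHermitian)
    (E₀ : ℝ)
    (hmin : ∀ i, E₀ ≤ hH.eigenvalues i)
    (hmem : ∃ i, hH.eigenvalues i = E₀)
    (P₀ : Matrix (Fin n) (Fin n) ℂ)
    (hP₀herm : P₀.IsHermitian)
    (hP₀idem : P₀ * P₀ = P₀)
    (hP₀range : H * P₀ = (E₀ : ℂ) • P₀)
    (hP₀fix : ∀ v : Fin n → ℂ, H.mulVec v = (E₀ : ℂ) • v → P₀.mulVec v = v)
    (d : ℕ) (hd : d = P₀.rank)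
    (A : Matrix (Fin n) (Fin n) ℂ) :
    Tendsto
      (fun β : ℝ =>
        Matrix.trace (A * NormedSpace.exp ((-β : ℂ) • H)) /
          Matrix.trace (NormedSpace.exp ((-β : ℂ) • H)))
      atTop (nhds (Matrix.trace (P₀ * A) / (d : ℂ))) := by
  classical
  set U : Matrix (Fin n) (Fin n) ℂ := (hH.eigenvectorUnitary : Matrix (Fin n) (Fin n) ℂ) with hUdef
  set lam : Fin n → ℝ := hH.eigenvalues with hlam
  have hsU : star U * U = 1 := Matrix.mem_unitaryGroup_iff'.mp hH.eigenvectorUnitary.2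
  have hUs : U * star U = 1 := Matrix.mem_unitaryGroup_iff.mp hH.eigenvectorUnitary.2
  have hUinv : U⁻¹ = star U := Matrix.inv_eq_left_inv hsU
  have hUnit : IsUnit U := ⟨⟨U, star U, hUs, hsU⟩, rfl⟩
  have hsUnit : IsUnit (star U) := ⟨⟨star U, U, hsU, hUs⟩, rfl⟩
  -- the matrix exponential
  have hexp : ∀ β : ℝ, NormedSpace.exp ((-β : ℂ) • H) =
      U * Matrix.diagonal (fun i => Complex.exp (-(β:ℂ) * (lam i : ℂ))) * star U := by
    intro β
    have hdiag : Matrix.diagonal (fun i => (-(β:ℂ)) * (lam i : ℂ)) =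
        (-(β:ℂ)) • Matrix.diagonal (RCLike.ofReal ∘ lam) := by
      ext i j
      by_cases h : i = j <;> simp [Matrix.diagonal, h]
    have h1 : ((-β : ℂ) • H) = U * Matrix.diagonal (fun i => (-(β:ℂ)) * (lam i : ℂ)) * U⁻¹ := by
      rw [hdiag, Matrix.mul_smul, Matrix.smul_mul, hUinv, ← (show H = U * Matrix.diagonal (RCLike.ofReal ∘ lam) * star U from hH.spectral_theorem)]
    rw [h1, Matrix.exp_conj U _ hUnit, Matrix.exp_diagonal, hUinv]
    congr 1
    funext i
    simp [Pi.exp_def, Complex.exp_eq_exp_ℂ]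
  -- notation
  set B : Matrix (Fin n) (Fin n) ℂ := star U * A * U with hB
  set χ : Fin n → ℂ := fun i => if lam i = E₀ then 1 else 0 with hχ
  set Q : Matrix (Fin n) (Fin n) ℂ := U * Matrix.diagonal χ * star U with hQ
  set S : Finset (Fin n) := Finset.univ.filter (fun i => lam i = E₀) with hS
  -- spectral form of H
  have hHspec : H = U * Matrix.diagonal (RCLike.ofReal ∘ lam) * star U := hH.spectral_theorem
  -- H * Q = E₀ • Q
  have hHQ : H * Q = (E₀ : ℂ) • Q := by
    have hdd : Matrix.diagonal (RCLike.ofReal ∘ lam) * Matrix.diagonal χ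
        = (E₀ : ℂ) • Matrix.diagonal χ := by
      rw [Matrix.diagonal_mul_diagonal]
      ext i j
      by_cases h : i = j
      · subst h
        by_cases h2 : lam i = E₀ <;> simp [Matrix.diagonal, hχ, h2]
      · simp [Matrix.diagonal, h]
    calc H * Q = U * (Matrix.diagonal (RCLike.ofReal ∘ lam) * (star U * U) * Matrix.diagonal χ) * star U := by
          rw [hHspec, hQ]; simp only [mul_assoc]
      _ = U * ((E₀:ℂ) • Matrix.diagonal χ) * star U := by rw [hsU, mul_one, hdd]
      _ = (E₀ : ℂ) • Q := by rw [Matrix.mul_smul, Matrix.smul_mul, hQ]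
  -- Q fixes eigenvectors
  have hQfix : ∀ v : Fin n → ℂ, H.mulVec v = (E₀ : ℂ) • v → Q.mulVec v = v := by
    intro v hv
    set w : Fin n → ℂ := (star U).mulVec v with hw
    have hDw : (Matrix.diagonal (RCLike.ofReal ∘ lam)).mulVec w = (E₀ : ℂ) • w := by
      have h0 := congrArg (fun x => (star U).mulVec x) hv
      simp only [Matrix.mulVec_smul] at h0
      rw [hHspec, Matrix.mulVec_mulVec] at h0
      have hss : star U * (U * Matrix.diagonal (RCLike.ofReal ∘ lam) * star U)
          = Matrix.diagonal (RCLike.ofReal ∘ lam) * star U := by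
        rw [← mul_assoc, ← mul_assoc, hsU, one_mul]
      rw [hss, ← Matrix.mulVec_mulVec] at h0
      exact h0
    have hwz : ∀ i, lam i ≠ E₀ → w i = 0 := by
      intro i hi
      have h1 : (lam i : ℂ) * w i = (E₀ : ℂ) * w i := by
        have := congrFun hDw i
        simpa [Matrix.mulVec_diagonal] using this
      have h2 : ((lam i : ℂ) - (E₀ : ℂ)) * w i = 0 := by linear_combination h1
      rcases mul_eq_zero.mp h2 with h | h
      · exact absurd (by exact_mod_cast sub_eq_zero.mp h) hi
      · exact h
    have hχw : (Matrix.diagonal χ).mulVec w = w := by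
      funext i
      by_cases h : lam i = E₀
      · simp [Matrix.mulVec_diagonal, hχ, h]
      · simp [Matrix.mulVec_diagonal, hχ, h, hwz i h]
    calc Q.mulVec v = U.mulVec ((Matrix.diagonal χ).mulVec ((star U).mulVec v)) := by
          rw [hQ, ← Matrix.mulVec_mulVec, ← Matrix.mulVec_mulVec]
      _ = U.mulVec w := by rw [← hw, hχw]
      _ = v := by rw [hw, Matrix.mulVec_mulVec, hUs, Matrix.one_mulVec]
  -- P₀ * Q = Q
  have hPQ : P₀ * Q = Q := by
    ext i j
    have hcol : H.mulVec (fun k => Q k j) = (E₀ : ℂ) • (fun k => Q k j) := by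
      funext i
      have := congrFun (congrFun hHQ i) j
      simpa [Matrix.mulVec, Matrix.mul_apply, dotProduct] using this
    have := congrFun (hP₀fix _ hcol) i
    simpa [Matrix.mulVec, Matrix.mul_apply, dotProduct] using this
  -- Q * P₀ = P₀
  have hQP : Q * P₀ = P₀ := by
    ext i j
    have hcol : H.mulVec (fun k => P₀ k j) = (E₀ : ℂ) • (fun k => P₀ k j) := by
      funext i
      have := congrFun (congrFun hP₀range i) j
      simpa [Matrix.mulVec, Matrix.mul_apply, dotProduct] using this
    have := congrFun (hQfix _ hcol) i
    simpa [Matrix.mulVec, Matrix.mul_apply, dotProduct] using this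
  -- Q is Hermitian
  have hQherm : Q.IsHermitian := by
    have hχstar : star χ = χ := by
      funext i
      by_cases h : lam i = E₀ <;> simp [hχ, h]
    show Qᴴ = Q
    rw [hQ]
    simp only [Matrix.conjTranspose_mul, Matrix.diagonal_conjTranspose, hχstar,
      Matrix.star_eq_conjTranspose, Matrix.conjTranspose_conjTranspose]
    rw [mul_assoc]
  -- P₀ = Q
  have hPeqQ : P₀ = Q := by
    have h1 : P₀ * Q = P₀ := by
      have := congrArg Matrix.conjTranspose hQP
      rwa [Matrix.conjTranspose_mul, hP₀herm.eq, hQherm.eq] at this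
    rw [← h1, hPQ]
  -- trace formulas
  have htraceA : ∀ β : ℝ, Matrix.trace (A * NormedSpace.exp ((-β : ℂ) • H))
      = ∑ i, B i i * Complex.exp (-(β:ℂ) * (lam i : ℂ)) := by
    intro β
    rw [hexp β]
    rw [show A * (U * Matrix.diagonal (fun i => Complex.exp (-(β:ℂ) * (lam i : ℂ))) * star U)
        = (A * U * Matrix.diagonal (fun i => Complex.exp (-(β:ℂ) * (lam i : ℂ)))) * star U from by
      rw [← mul_assoc, ← mul_assoc]]
    rw [Matrix.trace_mul_comm, ← mul_assoc, ← mul_assoc, ← hB, trace_mul_diag]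
  have htraceexp : ∀ β : ℝ, Matrix.trace (NormedSpace.exp ((-β : ℂ) • H))
      = ∑ i, Complex.exp (-(β:ℂ) * (lam i : ℂ)) := by
    intro β
    rw [hexp β, Matrix.trace_mul_cycle, hsU, one_mul, Matrix.trace_diagonal]
  -- trace of P₀ * A
  have htrP : Matrix.trace (P₀ * A) = ∑ i ∈ S, B i i := by
    rw [hPeqQ, hQ]
    rw [show U * Matrix.diagonal χ * star U * A = (U * Matrix.diagonal χ) * (star U * A) from by
      rw [mul_assoc, mul_assoc]]
    rw [Matrix.trace_mul_comm, show star U * A * (U * Matrix.diagonal χ)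
        = (star U * A * U) * Matrix.diagonal χ from by rw [← mul_assoc], ← hB, trace_mul_diag,
      hS, Finset.sum_filter]
    congr 1
    funext i
    by_cases h : lam i = E₀ <;> simp [hχ, h]
  -- rank
  have hdetU : IsUnit U.det := (Matrix.isUnit_iff_isUnit_det U).mp hUnit
  have hdetsU : IsUnit (star U).det := (Matrix.isUnit_iff_isUnit_det _).mp hsUnit
  have hcard : d = S.card := by
    have h1 : P₀.rank = (Matrix.diagonal χ).rank := by
      rw [hPeqQ, hQ, Matrix.rank_mul_eq_left_of_isUnit_det (star U) (U * Matrix.diagonal χ) hdetsU,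
        Matrix.rank_mul_eq_right_of_isUnit_det U (Matrix.diagonal χ) hdetU]
    have h2 : (Matrix.diagonal χ).rank = Fintype.card {i // χ i ≠ 0} := Matrix.rank_diagonal χ
    have h3 : Fintype.card {i // χ i ≠ 0} = S.card := by
      rw [Fintype.card_subtype, hS]
      congr 1
      ext i
      by_cases h : lam i = E₀ <;> simp [hχ, h]
    rw [hd, h1, h2, h3]
  obtain ⟨i₀, hi₀⟩ := hmem
  have hSpos : 0 < S.card := Finset.card_pos.mpr ⟨i₀, by simp [hS, hi₀]⟩
  have hSne : ((S.card : ℕ) : ℂ) ≠ 0 := Nat.cast_ne_zero.mpr hSpos.ne'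
  -- analysis
  set μ : Fin n → ℝ := fun i => lam i - E₀ with hμ
  have hterm : ∀ i, Tendsto (fun β : ℝ => Complex.exp (-(β:ℂ) * (μ i : ℂ))) atTop (nhds (χ i)) := by
    intro i
    by_cases h : lam i = E₀
    · have hz : μ i = 0 := by simp [hμ, h]
      have : χ i = 1 := by simp [hχ, h]
      rw [this]
      simpa [hz] using (tendsto_const_nhds :
        Tendsto (fun _ : ℝ => (1 : ℂ)) atTop (nhds 1))
    · have hpos : 0 < μ i := sub_pos.mpr (lt_of_le_of_ne (hmin i) (Ne.symm h))
      have hz : χ i = 0 := by simp [hχ, h]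
      rw [hz, tendsto_zero_iff_norm_tendsto_zero]
      have heq : ∀ β : ℝ, ‖Complex.exp (-(β:ℂ) * (μ i : ℂ))‖ = Real.exp (-β * μ i) := by
        intro β
        have : (-(β:ℂ) * (μ i : ℂ)) = ((-β * μ i : ℝ) : ℂ) := by push_cast; ring
        rw [this, Complex.norm_exp_ofReal]
      simp only [heq]
      have h1 : Tendsto (fun β : ℝ => -β * μ i) atTop atBot := by
        have h2 : Tendsto (fun β : ℝ => β * μ i) atTop atTop :=
          tendsto_id.atTop_mul_const hpos
        have h3 := tendsto_neg_atTop_atBot.comp h2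
        simp only [Function.comp_def] at h3
        exact h3.congr (fun β => by ring)
      exact Real.tendsto_exp_atBot.comp h1
  have hnum : Tendsto (fun β : ℝ => ∑ i, B i i * Complex.exp (-(β:ℂ) * (μ i : ℂ))) atTop
      (nhds (∑ i, B i i * χ i)) :=
    tendsto_finset_sum _ (fun i _ => (hterm i).const_mul _)
  have hden : Tendsto (fun β : ℝ => ∑ i, Complex.exp (-(β:ℂ) * (μ i : ℂ))) atTop
      (nhds (∑ i, χ i)) :=
    tendsto_finset_sum _ (fun i _ => hterm i)
  have hsumχ : ∑ i, χ i = ((S.card : ℕ) : ℂ) := by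
    rw [hS]
    simp [hχ]
  have hsumB : ∑ i, B i i * χ i = ∑ i ∈ S, B i i := by
    rw [hS, Finset.sum_filter]
    congr 1
    funext i
    by_cases h : lam i = E₀ <;> simp [hχ, h]
  rw [hsumχ] at hden
  rw [hsumB] at hnum
  have main := hnum.div hden hSne
  -- identify the limit
  have hlimval : Matrix.trace (P₀ * A) / (d : ℂ) = (∑ i ∈ S, B i i) / ((S.card : ℕ) : ℂ) := by
    rw [htrP, hcard]
  rw [hlimval]
  apply main.congr
  intro β
  simp only [Pi.div_apply]
  rw [htraceA β, htraceexp β]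
  have hfac : ∀ i, Complex.exp (-(β:ℂ) * (lam i : ℂ))
      = Complex.exp (-(β:ℂ) * (μ i : ℂ)) * Complex.exp (-(β:ℂ) * (E₀ : ℂ)) := by
    intro i
    rw [← Complex.exp_add]
    congr 1
    have : ((μ i : ℝ) : ℂ) = (lam i : ℂ) - (E₀ : ℂ) := by push_cast [hμ]; ring
    rw [this]
    ring
  simp only [hfac, ← mul_assoc]
  rw [← Finset.sum_mul, ← Finset.sum_mul,
    mul_div_mul_right _ _ (Complex.exp_ne_zero (-(β:ℂ) * (E₀ : ℂ)))]
end

section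
/- Let H be an n×n Hermitian complex matrix, let β ≥ 0, and let B be any n×n complex matrix. Then the thermal expectation of the double commutator, Tr( exp(−βH) · [B, [H, B*]] ), is a nonnegative real number, where B* is the conjugate transpose of B and [X, Y] := XY − YX. -/
open Matrix

private lemma exp_diff_mul_nonneg (β x y : ℝ) (hβ : 0 ≤ β) :
    0 ≤ (Real.exp (-(β * x)) - Real.exp (-(β * y))) * (y - x) := by
  rcases le_total x y with h | h
  · apply mul_nonneg
    · exact sub_nonneg.2 (Real.exp_le_exp.2 (by nlinarith))
    · linarith
  · have h1 : Real.exp (-(β * x)) - Real.exp (-(β * y)) ≤ 0 :=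
      sub_nonpos.2 (Real.exp_le_exp.2 (by nlinarith))
    nlinarith

private lemma double_sum_nonneg {n : ℕ} (f : Fin n → Fin n → ℝ)
    (h : ∀ m k, 0 ≤ f m k + f k m) : 0 ≤ ∑ m, ∑ k, f m k := by
  have key : 0 ≤ ∑ m, ∑ k, (f m k + f k m) :=
    Finset.sum_nonneg fun m _ => Finset.sum_nonneg fun k _ => h m k
  have hs : ∑ m, ∑ k, f k m = ∑ m, ∑ k, f m k := Finset.sum_comm
  simp only [Finset.sum_add_distrib] at key
  rw [hs] at key
  linarith

private lemma conj_trace_eq {n : ℕ} (U R D C : Matrix (Fin n) (Fin n) ℂ)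
    (hU2 : Uᴴ * U = 1) :
    Matrix.trace (U * R * Uᴴ *
      ((U * C * Uᴴ) * ((U * D * Uᴴ) * (U * C * Uᴴ)ᴴ - (U * C * Uᴴ)ᴴ * (U * D * Uᴴ)) -
        ((U * D * Uᴴ) * (U * C * Uᴴ)ᴴ - (U * C * Uᴴ)ᴴ * (U * D * Uᴴ)) * (U * C * Uᴴ))) =
    Matrix.trace (R * (C * (D * Cᴴ - Cᴴ * D) - (D * Cᴴ - Cᴴ * D) * C)) := by
  have cancel : ∀ X : Matrix (Fin n) (Fin n) ℂ, Uᴴ * (U * X) = X := fun X => by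
    rw [← Matrix.mul_assoc, hU2, Matrix.one_mul]
  have h : U * R * Uᴴ *
      ((U * C * Uᴴ) * ((U * D * Uᴴ) * (U * C * Uᴴ)ᴴ - (U * C * Uᴴ)ᴴ * (U * D * Uᴴ)) -
        ((U * D * Uᴴ) * (U * C * Uᴴ)ᴴ - (U * C * Uᴴ)ᴴ * (U * D * Uᴴ)) * (U * C * Uᴴ)) =
      U * (R * (C * (D * Cᴴ - Cᴴ * D) - (D * Cᴴ - Cᴴ * D) * C)) * Uᴴ := by
    simp only [conjTranspose_mul, conjTranspose_conjTranspose, Matrix.mul_sub,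
      Matrix.sub_mul, Matrix.mul_assoc, cancel]
  rw [h, Matrix.trace_mul_comm, ← Matrix.mul_assoc, hU2, Matrix.one_mul]

private lemma diag_trace {n : ℕ} (E r : Fin n → ℝ) (C : Matrix (Fin n) (Fin n) ℂ) :
    Matrix.trace (diagonal (fun i => (r i : ℂ)) *
      (C * (diagonal (fun i => (E i : ℂ)) * Cᴴ - Cᴴ * diagonal (fun i => (E i : ℂ))) -
       (diagonal (fun i => (E i : ℂ)) * Cᴴ - Cᴴ * diagonal (fun i => (E i : ℂ))) * C)) =
    ((∑ m, ∑ k, r m * ((E k - E m) *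
      (Complex.normSq (C m k) + Complex.normSq (C k m)))) : ℝ) := by
  set D : Matrix (Fin n) (Fin n) ℂ := diagonal (fun i => (E i : ℂ)) with hD
  set K : Matrix (Fin n) (Fin n) ℂ := D * Cᴴ - Cᴴ * D with hKdef
  have hK : ∀ a b, K a b = ((E a - E b : ℝ) : ℂ) * (starRingEnd ℂ) (C b a) := by
    intro a b
    simp only [hKdef, hD, Matrix.sub_apply, Matrix.diagonal_mul, Matrix.mul_diagonal,
      Matrix.conjTranspose_apply, RCLike.star_def]
    push_cast
    ring
  have hY : ∀ m, (C * K - K * C) m m =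
      ∑ k, (((E k - E m : ℝ) : ℂ) *
        ((Complex.normSq (C m k) : ℂ) + (Complex.normSq (C k m) : ℂ))) := by
    intro m
    simp only [Matrix.sub_apply, Matrix.mul_apply, ← Finset.sum_sub_distrib]
    refine Finset.sum_congr rfl fun k _ => ?_
    rw [hK, hK]
    push_cast
    linear_combination (((E k : ℂ) - E m)) * Complex.mul_conj (C m k) +
      (((E k : ℂ) - E m)) * Complex.mul_conj (C k m)
  have htr : Matrix.trace (diagonal (fun i => (r i : ℂ)) * (C * K - K * C)) =
      ∑ m, (r m : ℂ) * ((C * K - K * C) m m) := by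
    simp [Matrix.trace, Matrix.diag, Matrix.diagonal_mul]
  rw [htr]
  push_cast
  refine Finset.sum_congr rfl fun m _ => ?_
  rw [hY, Finset.mul_sum]
  refine Finset.sum_congr rfl fun k _ => ?_
  push_cast
  ring

/-- For an `n × n` Hermitian complex matrix `H`, `β ≥ 0` and any
`n × n` complex matrix `B`, the thermal expectation of the double commutator
`Tr( e^{−βH} [B, [H, B*]] )` is a nonnegative real number. -/
theorem trace_exp_double_commutator_nonneg
    {n : ℕ} (H : Matrix (Fin n) (Fin n) ℂ) (hH : H.IsHermitian)
    (β : ℝ) (hβ : 0 ≤ β)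
    (B : Matrix (Fin n) (Fin n) ℂ) :
    (Matrix.trace (NormedSpace.exp ((-β : ℂ) • H) *
        (B * (H * Bᴴ - Bᴴ * H) - (H * Bᴴ - Bᴴ * H) * B))).im = 0 ∧
      0 ≤ (Matrix.trace (NormedSpace.exp ((-β : ℂ) • H) *
        (B * (H * Bᴴ - Bᴴ * H) - (H * Bᴴ - Bᴴ * H) * B))).re := by
  classical
  set U : Matrix (Fin n) (Fin n) ℂ := (hH.eigenvectorUnitary : Matrix (Fin n) (Fin n) ℂ)
    with hUdef
  set E : Fin n → ℝ := hH.eigenvalues with hEdef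
  have hU1 : U * Uᴴ = 1 := by
    have := (Matrix.mem_unitaryGroup_iff).mp (hH.eigenvectorUnitary).2
    simpa [Matrix.star_eq_conjTranspose] using this
  have hU2 : Uᴴ * U = 1 := by
    have := (Matrix.mem_unitaryGroup_iff').mp (hH.eigenvectorUnitary).2
    simpa [Matrix.star_eq_conjTranspose] using this
  set D : Matrix (Fin n) (Fin n) ℂ := diagonal (fun i => (E i : ℂ)) with hDdef
  have hspec : H = U * D * Uᴴ := by
    have := hH.spectral_theorem
    exact this
  set R : Matrix (Fin n) (Fin n) ℂ :=
    diagonal (fun i => ((Real.exp (-(β * E i)) : ℝ) : ℂ)) with hRdef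
  have hUunit : IsUnit U := ⟨⟨U, Uᴴ, hU1, hU2⟩, rfl⟩
  have hUinv : U⁻¹ = Uᴴ := Matrix.inv_eq_left_inv hU2
  have hexp : NormedSpace.exp ((-β : ℂ) • H) = U * R * Uᴴ := by
    have h1 : (-β : ℂ) • H = U * ((-β : ℂ) • D) * U⁻¹ := by
      rw [hspec, hUinv]
      simp only [smul_mul_assoc, mul_smul_comm]
    rw [h1, Matrix.exp_conj U _ hUunit, hUinv]
    congr 1
    have h2 : (-β : ℂ) • D = diagonal (fun i => (-β : ℂ) * (E i : ℂ)) := by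
      ext i j
      by_cases h : i = j <;>
        simp [hDdef, Matrix.diagonal_apply, Matrix.smul_apply, h]
    rw [h2, Matrix.exp_diagonal, Pi.exp_def, ← Complex.exp_eq_exp_ℂ, hRdef]
    congr 1
    exact congrArg diagonal (funext fun i => by rw [Complex.ofReal_exp]; push_cast; ring_nf)
  obtain ⟨C, rfl⟩ : ∃ C, B = U * C * Uᴴ := by
    refine ⟨Uᴴ * B * U, ?_⟩
    have cancel : ∀ X : Matrix (Fin n) (Fin n) ℂ, Uᴴ * (U * X) = X := fun X => by
      rw [← Matrix.mul_assoc, hU2, Matrix.one_mul]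
    have cancel' : ∀ X : Matrix (Fin n) (Fin n) ℂ, U * (Uᴴ * X) = X := fun X => by
      rw [← Matrix.mul_assoc, hU1, Matrix.one_mul]
    calc B = U * (Uᴴ * (B * (U * Uᴴ))) := by rw [hU1, Matrix.mul_one, cancel']
    _ = U * (Uᴴ * B * U) * Uᴴ := by simp only [Matrix.mul_assoc]
  rw [hexp, hspec, conj_trace_eq U R D C hU2, hDdef, hRdef, diag_trace]
  constructor
  · exact Complex.ofReal_im _
  · rw [Complex.ofReal_re]
    apply double_sum_nonneg
    intro m k
    have h := mul_nonneg (exp_diff_mul_nonneg β (E m) (E k) hβ)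
      (add_nonneg (Complex.normSq_nonneg (C m k)) (Complex.normSq_nonneg (C k m)))
    nlinarith [h]
end

section
/- Let H be an n×n Hermitian complex matrix and β > 0, and for n×n complex matrices A, B define the Duhamel two-point function (A, B)_{β,H} := (Tr e^{−βH})^{−1} ∫₀¹ Tr( e^{−sβH} A e^{−(1−s)βH} B ) ds. Then: (i) (A, B)_{β,H} = (B, A)_{β,H} for all A, B; (ii) (A*, A)_{β,H} is a nonnegative real number for every A; and (iii) if A = A₁ + iA₂ with A₁ and A₂ Hermitian, then (A*, A)_{β,H} = (A₁, A₁)_{β,H} + (A₂, A₂)_{β,H}. -/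
open Matrix MeasureTheory

/-- The Duhamel two-point function
`(A, B)_{β,H} := (Tr e^{−βH})⁻¹ ∫₀¹ Tr( e^{−sβH} A e^{−(1−s)βH} B ) ds`. -/
noncomputable def duhamel {n : ℕ} (H : Matrix (Fin n) (Fin n) ℂ) (β : ℝ)
    (A B : Matrix (Fin n) (Fin n) ℂ) : ℂ :=
  (Matrix.trace (NormedSpace.exp ((-β : ℂ) • H)))⁻¹ *
    ∫ s in (0:ℝ)..1,
      Matrix.trace (NormedSpace.exp (((-(s * β) : ℝ) : ℂ) • H) * A *
        NormedSpace.exp (((-((1 - s) * β) : ℝ) : ℂ) • H) * B)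

namespace DuhamelAux

variable {n : ℕ} (H : Matrix (Fin n) (Fin n) ℂ)

/-- exp of a real multiple of a Hermitian matrix is Hermitian. -/
lemma exp_herm (hH : H.IsHermitian) (t : ℝ) :
    (NormedSpace.exp ((t : ℂ) • H))ᴴ = NormedSpace.exp ((t : ℂ) • H) := by
  rw [← Matrix.exp_conjTranspose]
  congr 1
  rw [conjTranspose_smul, hH.eq, Complex.star_def, Complex.conj_ofReal]

lemma exp_mul_exp (a b : ℝ) :
    NormedSpace.exp ((a : ℂ) • H) * NormedSpace.exp ((b : ℂ) • H) =
      NormedSpace.exp (((a + b : ℝ) : ℂ) • H) := by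
  have hc : Commute ((a : ℂ) • H) ((b : ℂ) • H) :=
    ((Commute.refl H).smul_left _).smul_right _
  have h2 : ((a + b : ℝ) : ℂ) • H = (a : ℂ) • H + (b : ℂ) • H := by
    push_cast; rw [add_smul]
  rw [h2]
  exact (Matrix.exp_add_of_commute _ _ hc).symm

lemma exp_half (t : ℝ) :
    NormedSpace.exp ((t : ℂ) • H) =
      NormedSpace.exp (((t / 2 : ℝ) : ℂ) • H) *
        NormedSpace.exp (((t / 2 : ℝ) : ℂ) • H) := by
  rw [exp_mul_exp]
  norm_num

/-- Trace of `Mᴴ * M` is a nonnegative real. -/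
lemma trace_conjTranspose_mul_self (M : Matrix (Fin n) (Fin n) ℂ) :
    ∃ r : ℝ, 0 ≤ r ∧ Matrix.trace (Mᴴ * M) = (r : ℂ) := by
  refine ⟨∑ i, ∑ j, Complex.normSq (M j i),
    Finset.sum_nonneg fun i _ => Finset.sum_nonneg fun j _ => Complex.normSq_nonneg _, ?_⟩
  rw [Matrix.trace]
  push_cast
  refine Finset.sum_congr rfl fun i _ => ?_
  simp only [Matrix.diag_apply, Matrix.mul_apply, Matrix.conjTranspose_apply]
  refine Finset.sum_congr rfl fun j _ => ?_
  rw [Complex.star_def]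
  exact Complex.normSq_eq_conj_mul_self.symm

/-- The key pointwise fact: `Tr(e^{s H} Aᴴ e^{t H} A)` is a nonnegative real. -/
lemma trace_key (hH : H.IsHermitian) (A : Matrix (Fin n) (Fin n) ℂ) (s t : ℝ) :
    ∃ r : ℝ, 0 ≤ r ∧
      Matrix.trace (NormedSpace.exp ((s : ℂ) • H) * Aᴴ *
        NormedSpace.exp ((t : ℂ) • H) * A) = (r : ℂ) := by
  set C := NormedSpace.exp (((s / 2 : ℝ) : ℂ) • H) with hC
  set D := NormedSpace.exp (((t / 2 : ℝ) : ℂ) • H) with hD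
  have hCh : Cᴴ = C := exp_herm H hH _
  have hDh : Dᴴ = D := exp_herm H hH _
  obtain ⟨r, hr, hr2⟩ := trace_conjTranspose_mul_self (D * A * C)
  refine ⟨r, hr, ?_⟩
  rw [exp_half H s, exp_half H t, ← hC, ← hD, ← hr2]
  rw [conjTranspose_mul, conjTranspose_mul, hCh, hDh]
  rw [show C * (Aᴴ * D) * (D * A * C) = (C * (Aᴴ * D) * (D * A)) * C from by
    simp only [Matrix.mul_assoc]]
  conv_rhs => rw [Matrix.trace_mul_comm]
  simp only [Matrix.mul_assoc]

lemma trace_swap (X Y Z W : Matrix (Fin n) (Fin n) ℂ) :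
    (X * Y * Z * W).trace = (Z * W * X * Y).trace := by
  rw [show X * Y * Z * W = (X * Y) * (Z * W) from by rw [Matrix.mul_assoc],
    Matrix.trace_mul_comm,
    show (Z * W) * (X * Y) = Z * W * X * Y from (Matrix.mul_assoc _ _ _).symm]

lemma cont_exp {f : ℝ → ℝ} (hf : Continuous f) :
    Continuous fun s : ℝ => NormedSpace.exp (((f s : ℝ) : ℂ) • H) := by
  letI : SeminormedRing (Matrix (Fin n) (Fin n) ℂ) := Matrix.linftyOpSemiNormedRing
  letI : NormedRing (Matrix (Fin n) (Fin n) ℂ) := Matrix.linftyOpNormedRing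
  letI : NormedAlgebra ℂ (Matrix (Fin n) (Fin n) ℂ) := Matrix.linftyOpNormedAlgebra
  let +nondep : NormedAlgebra ℚ (Matrix (Fin n) (Fin n) ℂ) := .restrictScalars ℚ ℂ _
  exact NormedSpace.exp_continuous.comp
    ((Complex.continuous_ofReal.comp hf).smul continuous_const)

lemma cont_integrand (β : ℝ) (A B : Matrix (Fin n) (Fin n) ℂ) :
    Continuous fun s : ℝ =>
      Matrix.trace (NormedSpace.exp (((-(s * β) : ℝ) : ℂ) • H) * A *
        NormedSpace.exp (((-((1 - s) * β) : ℝ) : ℂ) • H) * B) := by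
  have h1 : Continuous fun s : ℝ => -(s * β) := by fun_prop
  have h2 : Continuous fun s : ℝ => -((1 - s) * β) := by fun_prop
  exact Continuous.matrix_trace
    ((((cont_exp H h1).matrix_mul continuous_const).matrix_mul
      (cont_exp H h2)).matrix_mul continuous_const)

lemma integrable_integrand (β : ℝ) (A B : Matrix (Fin n) (Fin n) ℂ) :
    IntervalIntegrable (fun s : ℝ =>
      Matrix.trace (NormedSpace.exp (((-(s * β) : ℝ) : ℂ) • H) * A *
        NormedSpace.exp (((-((1 - s) * β) : ℝ) : ℂ) • H) * B))
      MeasureTheory.volume 0 1 :=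
  (cont_integrand H β A B).intervalIntegrable 0 1

lemma d_add_right (β : ℝ) (A B₁ B₂ : Matrix (Fin n) (Fin n) ℂ) :
    duhamel H β A (B₁ + B₂) = duhamel H β A B₁ + duhamel H β A B₂ := by
  unfold duhamel
  rw [← mul_add, ← intervalIntegral.integral_add
    (integrable_integrand H β A B₁) (integrable_integrand H β A B₂)]
  congr 1
  refine intervalIntegral.integral_congr fun s _ => ?_
  simp [Matrix.mul_add, Matrix.trace_add]

lemma d_add_left (β : ℝ) (A₁ A₂ B : Matrix (Fin n) (Fin n) ℂ) :
    duhamel H β (A₁ + A₂) B = duhamel H β A₁ B + duhamel H β A₂ B := by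
  unfold duhamel
  rw [← mul_add, ← intervalIntegral.integral_add
    (integrable_integrand H β A₁ B) (integrable_integrand H β A₂ B)]
  congr 1
  refine intervalIntegral.integral_congr fun s _ => ?_
  simp [Matrix.mul_add, Matrix.add_mul, Matrix.trace_add]

lemma d_smul_right (β : ℝ) (c : ℂ) (A B : Matrix (Fin n) (Fin n) ℂ) :
    duhamel H β A (c • B) = c * duhamel H β A B := by
  unfold duhamel
  have : ∀ s : ℝ,
      Matrix.trace (NormedSpace.exp (((-(s * β) : ℝ) : ℂ) • H) * A *
        NormedSpace.exp (((-((1 - s) * β) : ℝ) : ℂ) • H) * (c • B)) =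
      c • Matrix.trace (NormedSpace.exp (((-(s * β) : ℝ) : ℂ) • H) * A *
        NormedSpace.exp (((-((1 - s) * β) : ℝ) : ℂ) • H) * B) := by
    intro s
    rw [mul_smul_comm, Matrix.trace_smul]
  simp only [this]
  rw [intervalIntegral.integral_smul]
  simp only [smul_eq_mul]
  ring

lemma d_smul_left (β : ℝ) (c : ℂ) (A B : Matrix (Fin n) (Fin n) ℂ) :
    duhamel H β (c • A) B = c * duhamel H β A B := by
  unfold duhamel
  have : ∀ s : ℝ,
      Matrix.trace (NormedSpace.exp (((-(s * β) : ℝ) : ℂ) • H) * (c • A) *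
        NormedSpace.exp (((-((1 - s) * β) : ℝ) : ℂ) • H) * B) =
      c • Matrix.trace (NormedSpace.exp (((-(s * β) : ℝ) : ℂ) • H) * A *
        NormedSpace.exp (((-((1 - s) * β) : ℝ) : ℂ) • H) * B) := by
    intro s
    rw [mul_smul_comm, Matrix.smul_mul, Matrix.smul_mul, Matrix.trace_smul]
  simp only [this]
  rw [intervalIntegral.integral_smul]
  simp only [smul_eq_mul]
  ring

end DuhamelAux

/-- For an `n × n` Hermitian complex matrix `H` and `β > 0`, the
Duhamel two-point function satisfies: (i) it is symmetric, `(A, B) = (B, A)`;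
(ii) `(A*, A)` is a nonnegative real number; (iii) if `A = A₁ + iA₂` with `A₁, A₂`
Hermitian, then `(A*, A) = (A₁, A₁) + (A₂, A₂)`. -/
theorem duhamel_symm_nonneg_decomp
    {n : ℕ} (H : Matrix (Fin n) (Fin n) ℂ) (hH : H.IsHermitian)
    (β : ℝ) (hβ : 0 < β) :
    (∀ A B : Matrix (Fin n) (Fin n) ℂ, duhamel H β A B = duhamel H β B A) ∧
      (∀ A : Matrix (Fin n) (Fin n) ℂ,
        (duhamel H β Aᴴ A).im = 0 ∧ 0 ≤ (duhamel H β Aᴴ A).re) ∧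
      (∀ A A₁ A₂ : Matrix (Fin n) (Fin n) ℂ,
        A₁.IsHermitian → A₂.IsHermitian → A = A₁ + Complex.I • A₂ →
          duhamel H β Aᴴ A = duhamel H β A₁ A₁ + duhamel H β A₂ A₂) := by
  open DuhamelAux in
  -- Part (i): symmetry
  have hsymm : ∀ A B : Matrix (Fin n) (Fin n) ℂ, duhamel H β A B = duhamel H β B A := by
    intro A B
    unfold duhamel
    congr 1
    have h := intervalIntegral.integral_comp_sub_left (a := (0:ℝ)) (b := 1)
      (fun u : ℝ => Matrix.trace (NormedSpace.exp (((-(u * β) : ℝ) : ℂ) • H) * B *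
        NormedSpace.exp (((-((1 - u) * β) : ℝ) : ℂ) • H) * A)) 1
    simp only [show ∀ x : ℝ, (1:ℝ) - (1 - x) = x from fun x => by ring, sub_self,
      sub_zero] at h
    rw [← h]
    refine intervalIntegral.integral_congr fun s _ => ?_
    exact trace_swap _ _ _ _
  refine ⟨hsymm, ?_, ?_⟩
  · -- Part (ii): nonnegativity
    intro A
    set F : ℝ → ℝ := fun s =>
      (Matrix.trace (NormedSpace.exp (((-(s * β) : ℝ) : ℂ) • H) * Aᴴ *
        NormedSpace.exp (((-((1 - s) * β) : ℝ) : ℂ) • H) * A)).re with hF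
    have hg : ∀ s : ℝ,
        Matrix.trace (NormedSpace.exp (((-(s * β) : ℝ) : ℂ) • H) * Aᴴ *
          NormedSpace.exp (((-((1 - s) * β) : ℝ) : ℂ) • H) * A) = ((F s : ℝ) : ℂ)
          ∧ 0 ≤ F s := by
      intro s
      obtain ⟨r, hr0, hr⟩ := trace_key H hH A (-(s * β)) (-((1 - s) * β))
      have hFr : F s = r := by rw [hF]; simp only [hr, Complex.ofReal_re]
      exact ⟨by rw [hFr, hr], by rw [hFr]; exact hr0⟩
    obtain ⟨z, hz0, hz⟩ := trace_conjTranspose_mul_self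
      (NormedSpace.exp (((-β / 2 : ℝ) : ℂ) • H))
    have hZ : Matrix.trace (NormedSpace.exp ((-β : ℂ) • H)) = (z : ℂ) := by
      rw [show ((-β : ℂ)) = ((-β : ℝ) : ℂ) from by push_cast; ring,
        exp_half H (-β)]
      nth_rewrite 1 [← exp_herm H hH (-β / 2)]
      exact hz
    have hI : (∫ s in (0:ℝ)..1,
        Matrix.trace (NormedSpace.exp (((-(s * β) : ℝ) : ℂ) • H) * Aᴴ *
          NormedSpace.exp (((-((1 - s) * β) : ℝ) : ℂ) • H) * A)) =
        ((∫ s in (0:ℝ)..1, F s : ℝ) : ℂ) := by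
      rw [intervalIntegral.integral_congr fun s _ => (hg s).1]
      exact intervalIntegral.integral_ofReal
    have hInn : 0 ≤ ∫ s in (0:ℝ)..1, F s :=
      intervalIntegral.integral_nonneg (by norm_num) fun s _ => (hg s).2
    have : duhamel H β Aᴴ A = ((z⁻¹ * ∫ s in (0:ℝ)..1, F s : ℝ) : ℂ) := by
      unfold duhamel
      rw [hZ, hI]
      push_cast
      ring
    rw [this]
    constructor
    · exact Complex.ofReal_im _
    · rw [Complex.ofReal_re]
      exact mul_nonneg (inv_nonneg.mpr hz0) hInn
  · -- Part (iii): decomposition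
    intro A A₁ A₂ h₁ h₂ hA
    have hAH : Aᴴ = A₁ + (-Complex.I) • A₂ := by
      rw [hA, conjTranspose_add, conjTranspose_smul, h₁.eq, h₂.eq,
        Complex.star_def, Complex.conj_I]
    rw [hAH, hA, d_add_left, d_add_right, d_add_right, d_smul_left, d_smul_left,
      d_smul_right, d_smul_right, hsymm A₂ A₁]
    have hII : Complex.I * Complex.I = -1 := Complex.I_mul_I
    linear_combination (duhamel H β A₂ A₂ + duhamel H β A₁ A₂) * hII
      + (duhamel H β A₂ A₂) * hII * (-1) - duhamel H β A₁ A₂ * hII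
      - duhamel H β A₂ A₂ * Complex.I_sq
end

section
/- Let H be an n×n positive semidefinite Hermitian complex matrix, let E > 0 be a real number, and let 0 < ε ≤ 2. Then the Loewner operator inequality H^{1+ε} ≼ E^{ε} · H + E^{ε−2} · H³ holds; that is, the matrix E^{ε} H + E^{ε−2} H³ − H^{1+ε} is positive semidefinite. -/
open Matrix
open scoped ComplexOrder

lemma scalar_bound (E : ℝ) (hE : 0 < E) (ε : ℝ) (hε : 0 < ε) (hε' : ε ≤ 2)
    (s : ℝ) (hs : 0 ≤ s) : s ^ (1 + ε) ≤ E ^ ε * s + E ^ (ε - 2) * s ^ 3 := by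
  rcases le_or_gt s E with h | h
  · have h1 : s ^ (1 + ε) = s * s ^ ε := by
      rw [Real.rpow_add' hs (by positivity), Real.rpow_one]
    have h2 : s ^ ε ≤ E ^ ε := Real.rpow_le_rpow hs h hε.le
    have h3 : 0 ≤ E ^ (ε - 2) * s ^ 3 := by positivity
    nlinarith [Real.rpow_nonneg hs ε]
  · have hs' : 0 < s := hE.trans h
    have h1 : s ^ (1 + ε) = s ^ 3 * s ^ (ε - 2) := by
      rw [← Real.rpow_natCast s 3, ← Real.rpow_add hs']
      congr 1; push_cast; ring
    have h2 : s ^ (ε - 2) ≤ E ^ (ε - 2) :=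
      Real.rpow_le_rpow_of_nonpos hE h.le (by linarith)
    have h4 : (0:ℝ) ≤ s ^ 3 := by positivity
    nlinarith [mul_nonneg (Real.rpow_nonneg hE.le ε) hs]


/-- Let `H` be an `n × n` positive semidefinite Hermitian complex
matrix, `E > 0` and `0 < ε ≤ 2`.  Then `H^{1+ε} ≼ E^ε H + E^{ε−2} H³` in the Loewner
order; here `H^{1+ε}` is defined by applying `s ↦ s^{1+ε}` to `H` via the continuous
functional calculus of the Hermitian matrix `H`. -/
theorem matrix_rpow_loewner_bound
    {n : ℕ} (H : Matrix (Fin n) (Fin n) ℂ) (hH : H.PosSemidef)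
    (E : ℝ) (hE : 0 < E) (ε : ℝ) (hε : 0 < ε) (hε' : ε ≤ 2) :
    ((E ^ ε) • H + (E ^ (ε - 2)) • (H * H * H)
      - hH.isHermitian.cfc (fun s : ℝ => s ^ (1 + ε))).PosSemidef := by
  have hH' := hH.isHermitian
  set U : Matrix (Fin n) (Fin n) ℂ := (hH'.eigenvectorUnitary : Matrix (Fin n) (Fin n) ℂ)
    with hUdef
  have hUU : star U * U = 1 := Matrix.UnitaryGroup.star_mul_self _
  set lam := hH'.eigenvalues with hlam
  have hspec : H = U * diagonal (fun i => ((lam i : ℝ) : ℂ)) * star U := hH'.spectral_theorem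
  have hcfc : hH.isHermitian.cfc (fun s : ℝ => s ^ (1 + ε))
      = U * diagonal (fun i => ((lam i ^ (1 + ε) : ℝ) : ℂ)) * star U := rfl
  have hmul : ∀ v w : Fin n → ℂ,
      (U * diagonal v * star U) * (U * diagonal w * star U)
      = U * diagonal (v * w) * star U := by
    intro v w
    simp only [mul_assoc]
    rw [← mul_assoc (star U), hUU, one_mul, ← mul_assoc (diagonal v), diagonal_mul_diagonal]
    rfl
  have e1 : (E ^ ε) • H = U * diagonal (fun i => ((E ^ ε * lam i : ℝ) : ℂ)) * star U := by
    have hf : (E ^ ε) • (fun i => ((lam i : ℝ) : ℂ)) = fun i => ((E ^ ε * lam i : ℝ) : ℂ) := by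
      funext i
      rw [Pi.smul_apply, Complex.real_smul]
      push_cast
      ring
    rw [hspec, ← smul_mul_assoc, ← mul_smul_comm, ← diagonal_smul, hf]
  have e2 : (E ^ (ε - 2)) • (H * H * H)
      = U * diagonal (fun i => ((E ^ (ε - 2) * (lam i) ^ 3 : ℝ) : ℂ)) * star U := by
    have hf : (E ^ (ε - 2)) • (((fun i => ((lam i : ℝ) : ℂ)) * fun i => ((lam i : ℝ) : ℂ)) * fun i => ((lam i : ℝ) : ℂ))
        = fun i => ((E ^ (ε - 2) * (lam i) ^ 3 : ℝ) : ℂ) := by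
      funext i
      rw [Pi.smul_apply, Pi.mul_apply, Pi.mul_apply, Complex.real_smul]
      push_cast
      ring
    rw [hspec, hmul, hmul, ← smul_mul_assoc, ← mul_smul_comm, ← diagonal_smul, hf]
  have key : (E ^ ε) • H + (E ^ (ε - 2)) • (H * H * H)
      - hH.isHermitian.cfc (fun s : ℝ => s ^ (1 + ε))
      = U * diagonal (fun i =>
          ((E ^ ε * lam i + E ^ (ε - 2) * (lam i) ^ 3 - (lam i) ^ (1 + ε) : ℝ) : ℂ))
        * star U := by
    have hf : (fun i => (((E ^ ε * lam i : ℝ) : ℂ)) + ((E ^ (ε - 2) * (lam i) ^ 3 : ℝ) : ℂ) - ((lam i ^ (1 + ε) : ℝ) : ℂ))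
        = fun i => ((E ^ ε * lam i + E ^ (ε - 2) * (lam i) ^ 3 - (lam i) ^ (1 + ε) : ℝ) : ℂ) := by
      funext i
      push_cast
      ring
    rw [e1, e2, hcfc, ← add_mul, ← sub_mul, ← mul_add, ← mul_sub,
      diagonal_add, diagonal_sub, hf]
  rw [key]
  have hd : (diagonal (fun i =>
      ((E ^ ε * lam i + E ^ (ε - 2) * (lam i) ^ 3 - (lam i) ^ (1 + ε) : ℝ) : ℂ))).PosSemidef := by
    refine Matrix.posSemidef_diagonal_iff.mpr fun i => ?_
    rw [← Complex.ofReal_zero, Complex.real_le_real]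
    have := scalar_bound E hE ε hε hε' (lam i) (hH.eigenvalues_nonneg i)
    linarith
  simpa [Matrix.star_eq_conjTranspose] using hd.mul_mul_conjTranspose_same U
end
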